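/- arXiv:2305.03157 — 3 statements merged into one kernel-verified Lean document; each statement's English description precedes it below -/
import Mathlib

section
/- With the same setup, the generating function for all finite multisets of elements of 𝒜 (counted by total size) equals exp(Σ_{k≥1} A(x^k)/k), as an identity of formal power series, provided every element of 𝒜 has positive size. -/
open PowerSeries

/-- The formal exponential `exp f = ∑_{m≥0} f^m / m!` of a power series `f`
(intended for `f` with zero constant term, where only finitely many terms
contribute to each coefficient). -/
noncomputable def expPS (f : PowerSeries ℚ) : PowerSeries ℚ :=
  PowerSeries.mk fun n =>
    PowerSeries.coeff n (∑ m ∈ Finset.range (n + 1), (Nat.factorial m : ℚ)⁻¹ • f ^ m)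

/-- The substitution `f(x^k)` of `x^k` into the power series `f` (for `k ≥ 1`). -/
noncomputable def compXPow (f : PowerSeries ℚ) (k : ℕ) : PowerSeries ℚ :=
  PowerSeries.mk fun n => if k ∣ n then PowerSeries.coeff (n / k) f else 0

/-- The sum `∑_{k≥1} f(x^k)/k`, for `f` with zero constant term: its `n`-th
coefficient is `∑_{k ∣ n} (coeff (n/k) f)/k`. -/
noncomputable def dsum (f : PowerSeries ℚ) : PowerSeries ℚ :=
  PowerSeries.mk fun n => ∑ k ∈ n.divisors, (k : ℚ)⁻¹ * PowerSeries.coeff (n / k) f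

/-- The generating function `A(x) = ∑_{a ∈ 𝒜} x^{s a}`: coefficient of `x^n` is the
number of elements of size `n`. -/
noncomputable def genFun {α : Type*} (s : α → ℕ) : PowerSeries ℚ :=
  PowerSeries.mk fun n => (Nat.card {a : α // s a = n} : ℚ)

section Aux

open Finset

lemma coeff_pow_eq_zero {f : PowerSeries ℚ} (hf : constantCoeff f = 0) :
    ∀ m k : ℕ, k < m → PowerSeries.coeff k (f ^ m) = 0 := by
  intro m
  induction m with
  | zero => intro k hk; omega
  | succ m ih =>
    intro k hk
    rw [pow_succ, PowerSeries.coeff_mul]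
    apply Finset.sum_eq_zero
    rintro ⟨i, j⟩ hij
    replace hij : i + j = k := by simpa using hij
    rcases Nat.eq_zero_or_pos j with hj | hj
    · subst hj
      rw [PowerSeries.coeff_zero_eq_constantCoeff, hf, mul_zero]
    · rw [ih i (by omega), zero_mul]

lemma coeff_expPS {f : PowerSeries ℚ} (hf : constantCoeff f = 0) (n N : ℕ) (h : n < N) :
    PowerSeries.coeff n (∑ m ∈ Finset.range N, (Nat.factorial m : ℚ)⁻¹ • f ^ m)
      = PowerSeries.coeff n (expPS f) := by
  rw [expPS, PowerSeries.coeff_mk]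
  rw [map_sum, map_sum]
  rw [← Finset.sum_subset (Finset.range_subset_range.2 h)]
  intro m hm hm'
  rw [Finset.mem_range] at hm'
  rw [map_smul, coeff_pow_eq_zero hf m n (by omega), smul_zero]

lemma expPS_zero_coeff {f : PowerSeries ℚ} :
    PowerSeries.coeff 0 (expPS f) = 1 := by
  rw [expPS, PowerSeries.coeff_mk]
  simp [PowerSeries.coeff_zero_eq_constantCoeff]

lemma deriv_partial {f : PowerSeries ℚ} (N : ℕ) :
    d⁄dX ℚ (∑ m ∈ Finset.range (N+1), (Nat.factorial m : ℚ)⁻¹ • f ^ m)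
      = (d⁄dX ℚ f) * (∑ m ∈ Finset.range N, (Nat.factorial m : ℚ)⁻¹ • f ^ m) := by
  rw [map_sum, Finset.sum_range_succ', Finset.mul_sum]
  simp only [Derivation.map_smul, Derivation.leibniz_pow, zero_smul, smul_zero, add_zero,
    Nat.add_sub_cancel]
  apply Finset.sum_congr rfl
  intro m _
  have h1 : ((Nat.factorial (m+1) : ℚ))⁻¹ * ((m : ℚ) + 1) = (Nat.factorial m : ℚ)⁻¹ := by
    rw [Nat.factorial_succ]
    push_cast
    rw [mul_comm ((m:ℚ)+1), mul_inv, mul_assoc, inv_mul_cancel₀ (by positivity), mul_one]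
  rw [smul_eq_mul, ← Nat.cast_smul_eq_nsmul ℚ (m+1), smul_smul, Nat.cast_add, Nat.cast_one, h1,
    mul_comm, mul_smul_comm]

lemma expPS_recurrence {f : PowerSeries ℚ} (hf : constantCoeff f = 0) (n : ℕ) :
    ((n:ℚ)+1) * PowerSeries.coeff (n+1) (expPS f)
      = ∑ j ∈ Finset.range (n+1),
          (((j:ℚ)+1) * PowerSeries.coeff (j+1) f) * PowerSeries.coeff (n-j) (expPS f) := by
  have h1 : PowerSeries.coeff n
        (d⁄dX ℚ (∑ m ∈ Finset.range (n+2), (Nat.factorial m : ℚ)⁻¹ • f ^ m))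
      = PowerSeries.coeff (n+1) (expPS f) * ((n:ℚ)+1) := by
    rw [PowerSeries.coeff_derivative, coeff_expPS hf (n+1) (n+2) (by omega)]
  rw [show n+2 = (n+1)+1 from rfl, deriv_partial (N := n+1), PowerSeries.coeff_mul] at h1
  rw [mul_comm, ← h1, Finset.Nat.sum_antidiagonal_eq_sum_range_succ_mk]
  apply Finset.sum_congr rfl
  intro j hj
  rw [Finset.mem_range] at hj
  rw [PowerSeries.coeff_derivative, coeff_expPS hf (n-j) (n+1) (by omega)]
  push_cast
  ring

variable {α : Type*} (s : α → ℕ)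

lemma msum_le_msum {u v : Multiset ℕ} (h : u ≤ v) : u.sum ≤ v.sum := by
  obtain ⟨w, rfl⟩ := Multiset.le_iff_exists_add.mp h
  simp [Multiset.sum_add]

lemma count_mul_le [DecidableEq α] (a : α) (m : Multiset α) :
    m.count a * s a ≤ (m.map s).sum := by
  have h1 : Multiset.replicate (m.count a) a ≤ m :=
    Multiset.le_count_iff_replicate_le.mp le_rfl
  have h2 := msum_le_msum (Multiset.map_le_map (f := s) h1)
  rw [Multiset.map_replicate, Multiset.sum_replicate] at h2
  simpa [mul_comm] using h2

lemma mem_size_le (a : α) (m : Multiset α) (ha : a ∈ m) : s a ≤ (m.map s).sum :=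
  Multiset.le_sum_of_mem (Multiset.mem_map_of_mem s ha)

lemma card_le_msum (hpos : ∀ a : α, 0 < s a) (m : Multiset α) :
    Multiset.card m ≤ (m.map s).sum := by
  have := Multiset.card_nsmul_le_sum (s := m.map s) (a := 1) (fun x hx => by
    obtain ⟨b, _, rfl⟩ := Multiset.mem_map.mp hx; exact hpos b)
  simpa using this

lemma finite_le (hfin : ∀ n : ℕ, Finite {a : α // s a = n}) (n : ℕ) :
    Finite {a : α // s a ≤ n} := by
  have h : {a : α | s a ≤ n} = ⋃ d ∈ Set.Iic n, {a | s a = d} := by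
    ext a; simp
  have : ({a : α | s a ≤ n}).Finite := by
    rw [h]
    exact Set.Finite.biUnion (Set.finite_Iic n) (fun d _ => by
      have := hfin d; exact (Set.finite_coe_iff).mp this)
  exact this.to_subtype

lemma finite_M (hfin : ∀ n : ℕ, Finite {a : α // s a = n}) (hpos : ∀ a : α, 0 < s a) (n : ℕ) :
    Finite {m : Multiset α // (m.map s).sum = n} := by
  classical
  haveI := finite_le s hfin n
  apply Finite.of_injective
    (fun m : {m : Multiset α // (m.map s).sum = n} =>
      (fun b : {a : α // s a ≤ n} => (⟨m.1.count b.1, by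
        have h1 := count_mul_le s b.1 m.1
        have h2 := hpos b.1
        have h3 := m.2
        have h4 : m.1.count b.1 * s b.1 ≤ n := le_trans h1 (le_of_eq h3)
        have h5 : m.1.count b.1 ≤ m.1.count b.1 * s b.1 := Nat.le_mul_of_pos_right _ h2
        omega⟩ : Fin (n+1))))
  intro m m' h
  apply Subtype.ext
  ext a
  by_cases hs : s a ≤ n
  · have := congrFun h ⟨a, hs⟩
    exact congrArg Fin.val this
  · rw [Multiset.count_eq_zero_of_notMem, Multiset.count_eq_zero_of_notMem]
    · intro ha; exact hs (m'.2 ▸ mem_size_le s a m'.1 ha)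
    · intro ha; exact hs (m.2 ▸ mem_size_le s a m.1 ha)

lemma L_zero (hpos : ∀ a : α, 0 < s a) :
    Nat.card {m : Multiset α // (m.map s).sum = 0} = 1 := by
  rw [Nat.card_eq_one_iff_unique]
  constructor
  · constructor
    intro m m'
    have key : ∀ mm : {m : Multiset α // (m.map s).sum = 0}, mm.1 = 0 := by
      intro mm
      by_contra h
      obtain ⟨a, ha⟩ := Multiset.exists_mem_of_ne_zero h
      have := mem_size_le s a mm.1 ha
      have := hpos a
      omega
    exact Subtype.ext ((key m).trans (key m').symm)
  · exact ⟨⟨0, by simp⟩⟩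

lemma card_count_ge [DecidableEq α] (a : α) (k n : ℕ) (h : k * s a ≤ n) :
    Nat.card {m : Multiset α // (m.map s).sum = n ∧ k ≤ m.count a}
      = Nat.card {m : Multiset α // (m.map s).sum = n - k * s a} := by
  apply Nat.card_congr
  refine ⟨fun m => ⟨m.1 - Multiset.replicate k a, ?_⟩,
    fun m => ⟨m.1 + Multiset.replicate k a, ?_, ?_⟩, ?_, ?_⟩
  · obtain ⟨hsum, hcount⟩ := m.2
    have hle : Multiset.replicate k a ≤ m.1 := Multiset.le_count_iff_replicate_le.mp hcount
    have hrec : (m.1 - Multiset.replicate k a) + Multiset.replicate k a = m.1 :=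
      tsub_add_cancel_of_le hle
    have h6 := congrArg (fun t : Multiset α => (t.map s).sum) hrec
    simp only [Multiset.map_add, Multiset.sum_add, Multiset.map_replicate,
      Multiset.sum_replicate, smul_eq_mul] at h6
    rw [hsum] at h6
    exact Nat.eq_sub_of_add_eq h6
  · rw [Multiset.map_add, Multiset.sum_add, Multiset.map_replicate, Multiset.sum_replicate,
      m.2, smul_eq_mul]
    exact Nat.sub_add_cancel h
  · rw [Multiset.count_add, Multiset.count_replicate_self]
    exact Nat.le_add_left k _
  · intro m
    apply Subtype.ext
    have hle : Multiset.replicate k a ≤ m.1 := Multiset.le_count_iff_replicate_le.mp m.2.2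
    exact tsub_add_cancel_of_le hle
  · intro m
    apply Subtype.ext
    exact add_tsub_cancel_right _ _

lemma sum_map_eq [DecidableEq α] (n : ℕ) [Fintype {a : α // s a ≤ n}]
    (m : Multiset α) (hm : ∀ x ∈ m, s x ≤ n) :
    (m.map s).sum = ∑ a : {a : α // s a ≤ n}, m.count a.1 * s a.1 := by
  induction m using Multiset.induction_on with
  | empty => simp
  | cons b m ih =>
    have hb : s b ≤ n := hm b (Multiset.mem_cons_self b m)
    have hm' : ∀ x ∈ m, s x ≤ n := fun x hx => hm x (Multiset.mem_cons_of_mem hx)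
    rw [Multiset.map_cons, Multiset.sum_cons, ih hm']
    have : ∀ a : {a : α // s a ≤ n}, (b ::ₘ m).count a.1 * s a.1
        = m.count a.1 * s a.1 + (if a = ⟨b, hb⟩ then s a.1 else 0) := by
      intro a
      rw [Multiset.count_cons]
      rcases eq_or_ne a ⟨b, hb⟩ with h | h
      · subst h; simp [add_mul]
      · have : ¬ (a.1 = b) := fun hh => h (Subtype.ext hh)
        simp [this, h]
    rw [Finset.sum_congr rfl (fun a _ => this a), Finset.sum_add_distrib,
      Finset.sum_ite_eq' Finset.univ (⟨b, hb⟩ : {a : α // s a ≤ n})]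
    simp [add_comm]

lemma comb (hfin : ∀ n : ℕ, Finite {a : α // s a = n}) (hpos : ∀ a : α, 0 < s a) (n : ℕ) :
    n * Nat.card {m : Multiset α // (m.map s).sum = n}
      = ∑ j ∈ Finset.range n, (∑ d ∈ (j+1).divisors, d * Nat.card {a : α // s a = d})
          * Nat.card {m : Multiset α // (m.map s).sum = n - (j+1)} := by
  classical
  haveI hT : Fintype {a : α // s a ≤ n} := @Fintype.ofFinite _ (finite_le s hfin n)
  haveI hM : ∀ k, Fintype {m : Multiset α // (m.map s).sum = k} :=
    fun k => @Fintype.ofFinite _ (finite_M s hfin hpos k)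
  set L : ℕ → ℕ := fun k => Nat.card {m : Multiset α // (m.map s).sum = k} with hLdef
  set A : ℕ → ℕ := fun d => Nat.card {a : α // s a = d} with hAdef
  set g : ℕ → ℕ := fun d => ∑ e ∈ Finset.Icc 1 (n / d), d * L (n - d * e) with hgdef
  -- RHS chain
  have hR1 : ∑ j ∈ Finset.range n, (∑ d ∈ (j+1).divisors, d * A d) * L (n - (j+1))
      = ∑ j ∈ Finset.range n, ∑ d ∈ (j+1).divisors, d * A d * L (n - (j+1)) := by
    apply Finset.sum_congr rfl; intro j _; rw [Finset.sum_mul]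
  have hR2 : ∀ j : ℕ, ∑ d ∈ (j+1).divisors, d * A d * L (n - (j+1))
      = ∑ p ∈ (j+1).divisorsAntidiagonal, p.1 * A p.1 * L (n - (j+1)) :=
    fun j => (Nat.sum_divisorsAntidiagonal (fun d _ => d * A d * L (n - (j+1)))).symm
  have hR4 : ∑ p ∈ (Finset.range n).sigma (fun j => (j+1).divisorsAntidiagonal),
        (p.2.1 * A p.2.1 * L (n - (p.1+1)))
      = ∑ q ∈ (Finset.Icc 1 n).sigma (fun d => Finset.Icc 1 (n / d)),
        (q.1 * A q.1 * L (n - q.1 * q.2)) := by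
    apply Finset.sum_nbij' (i := fun p => ⟨p.2.1, p.2.2⟩)
      (j := fun q => ⟨q.1 * q.2 - 1, (q.1, q.2)⟩)
    · rintro ⟨j, d, e⟩ hp
      simp only [Finset.mem_sigma, Finset.mem_range, Nat.mem_divisorsAntidiagonal] at hp
      obtain ⟨hj, h1, -⟩ := hp
      have hd : 0 < d := by rcases Nat.eq_zero_or_pos d with h | h; · subst h; simp at h1
                            · exact h
      have he : 0 < e := by rcases Nat.eq_zero_or_pos e with h | h; · subst h; simp at h1
                            · exact h
      have hdn : d * e ≤ n := by omega
      simp only [Finset.mem_sigma, Finset.mem_Icc]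
      refine ⟨⟨hd, ?_⟩, he, ?_⟩
      · calc d ≤ d * e := Nat.le_mul_of_pos_right _ he
          _ ≤ n := hdn
      · rw [Nat.le_div_iff_mul_le hd, mul_comm]; exact hdn
    · rintro ⟨d, e⟩ hq
      simp only [Finset.mem_sigma, Finset.mem_Icc] at hq
      obtain ⟨⟨hd1, hdn⟩, he1, hen⟩ := hq
      have hde : d * e ≤ n := by
        rw [mul_comm]; exact (Nat.le_div_iff_mul_le (by omega)).mp hen
      have hpos' : 0 < d * e := Nat.mul_pos hd1 he1
      simp only [Finset.mem_sigma, Finset.mem_range, Nat.mem_divisorsAntidiagonal]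
      exact ⟨by omega, by omega, by omega⟩
    · rintro ⟨j, d, e⟩ hp
      simp only [Finset.mem_sigma, Finset.mem_range, Nat.mem_divisorsAntidiagonal] at hp
      obtain ⟨hj, h1, -⟩ := hp
      dsimp only
      obtain rfl : j = d * e - 1 := by omega
      rfl
    · rintro ⟨d, e⟩ _; rfl
    · rintro ⟨j, d, e⟩ hp
      simp only [Finset.mem_sigma, Finset.mem_range, Nat.mem_divisorsAntidiagonal] at hp
      obtain ⟨hj, h1, -⟩ := hp
      dsimp only
      rw [show n - (j+1) = n - d * e by omega]
  have key : ∀ d, 1 ≤ d → d ≤ n →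
      (Finset.univ.filter (fun a : {a : α // s a ≤ n} => s a.1 = d)).card = A d := by
    intro d h1 h2
    haveI : Fintype {a : α // s a = d} := @Fintype.ofFinite _ (hfin d)
    rw [← Fintype.card_subtype]
    simp only [hAdef]
    rw [Nat.card_eq_fintype_card]
    exact Fintype.card_congr
      ⟨fun x => ⟨x.1.1, x.2⟩,
       fun y => ⟨⟨y.1, le_trans (le_of_eq y.2) h2⟩, y.2⟩,
       fun x => Subtype.ext (Subtype.ext rfl),
       fun y => Subtype.ext rfl⟩
  have hR5 : ∑ a : {a : α // s a ≤ n}, g (s a.1) = ∑ d ∈ Finset.Icc 1 n, A d * g d := by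
    rw [← Finset.sum_fiberwise_of_maps_to (g := fun a : {a : α // s a ≤ n} => s a.1)
      (t := Finset.Icc 1 n) (fun a _ => Finset.mem_Icc.mpr ⟨hpos a.1, a.2⟩) (fun a => g (s a.1))]
    apply Finset.sum_congr rfl
    intro d hd
    rw [Finset.mem_Icc] at hd
    rw [Finset.sum_congr rfl (fun a ha => by
      rw [(Finset.mem_filter.mp ha).2]), Finset.sum_const, smul_eq_mul, key d hd.1 hd.2]
  have hR6 : ∀ a : {a : α // s a ≤ n}, g (s a.1)
      = s a.1 * ∑ m : {m : Multiset α // (m.map s).sum = n}, m.1.count a.1 := by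
    intro a
    have hsa := hpos a.1
    have hKm : ∀ m : {m : Multiset α // (m.map s).sum = n}, m.1.count a.1 ≤ n / s a.1 := by
      intro m
      rw [Nat.le_div_iff_mul_le hsa]
      exact le_trans (count_mul_le s a.1 m.1) (le_of_eq m.2)
    have step1 : ∀ e ∈ Finset.Icc 1 (n / s a.1),
        s a.1 * L (n - s a.1 * e)
          = s a.1 * ∑ m : {m : Multiset α // (m.map s).sum = n},
              (if e ≤ m.1.count a.1 then 1 else 0) := by
      intro e he
      rw [Finset.mem_Icc] at he
      have h : e * s a.1 ≤ n := (Nat.le_div_iff_mul_le hsa).mp he.2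
      congr 1
      simp only [hLdef]
      rw [show n - s a.1 * e = n - e * s a.1 by rw [mul_comm], ← card_count_ge s a.1 e n h,
        Nat.card_congr (Equiv.subtypeSubtypeEquivSubtypeInter
          (fun m : Multiset α => (m.map s).sum = n)
          (fun m : Multiset α => e ≤ m.count a.1)).symm,
        Nat.card_eq_fintype_card, Fintype.card_subtype, Finset.card_filter]
    simp only [hgdef]
    rw [Finset.sum_congr rfl step1, ← Finset.mul_sum]
    congr 1
    rw [Finset.sum_comm]
    apply Finset.sum_congr rfl
    intro m _
    rw [← Finset.card_filter]
    have hfilt : Finset.filter (fun e => e ≤ m.1.count a.1) (Finset.Icc 1 (n / s a.1))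
        = Finset.Icc 1 (m.1.count a.1) := by
      ext e
      simp only [Finset.mem_filter, Finset.mem_Icc]
      have := hKm m
      omega
    rw [hfilt, Nat.card_Icc]
    omega
  -- LHS
  have hL1 : n * L n = ∑ m : {m : Multiset α // (m.map s).sum = n},
      ∑ a : {a : α // s a ≤ n}, m.1.count a.1 * s a.1 := by
    have : ∀ m : {m : Multiset α // (m.map s).sum = n},
        (n : ℕ) = ∑ a : {a : α // s a ≤ n}, m.1.count a.1 * s a.1 := by
      intro m
      have h := sum_map_eq s n m.1 (fun x hx => le_trans (mem_size_le s x m.1 hx) (le_of_eq m.2))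
      rw [← h, m.2]
    rw [Finset.sum_congr rfl (fun m _ => (this m).symm), Finset.sum_const, smul_eq_mul,
      Finset.card_univ]
    simp only [hLdef]
    rw [Nat.card_eq_fintype_card, mul_comm]
  have hsig1 : (∑ j ∈ Finset.range n, ∑ p ∈ (j+1).divisorsAntidiagonal,
        p.1 * A p.1 * L (n - (j+1)))
      = ∑ p ∈ (Finset.range n).sigma (fun j => (j+1).divisorsAntidiagonal),
          p.2.1 * A p.2.1 * L (n - (p.1+1)) :=
    Finset.sum_sigma' _ _ _
  have hsig2 : (∑ d ∈ Finset.Icc 1 n, ∑ e ∈ Finset.Icc 1 (n / d), d * A d * L (n - d * e))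
      = ∑ q ∈ (Finset.Icc 1 n).sigma (fun d => Finset.Icc 1 (n / d)),
          q.1 * A q.1 * L (n - q.1 * q.2) :=
    Finset.sum_sigma' _ _ _
  rw [hL1, hR1, Finset.sum_congr rfl (fun j _ => hR2 j), hsig1, hR4, ← hsig2]
  have hstep : ∀ d ∈ Finset.Icc 1 n,
      ∑ e ∈ Finset.Icc 1 (n / d), d * A d * L (n - d * e) = A d * g d := by
    intro d _
    simp only [hgdef]
    rw [Finset.mul_sum]
    exact Finset.sum_congr rfl (fun e _ => by ring)
  rw [Finset.sum_congr rfl hstep, ← hR5, Finset.sum_congr rfl (fun a _ => hR6 a),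
    Finset.sum_congr rfl (fun a _ => Finset.mul_sum _ _ _), Finset.sum_comm]
  apply Finset.sum_congr rfl
  intro m _
  exact Finset.sum_congr rfl (fun a _ => mul_comm _ _)


lemma dsum_constantCoeff (f : PowerSeries ℚ) : constantCoeff (dsum f) = 0 := by
  rw [← PowerSeries.coeff_zero_eq_constantCoeff, dsum, PowerSeries.coeff_mk]
  simp

lemma dsum_coeff_succ {α : Type*} (s : α → ℕ) (j : ℕ) :
    ((j:ℚ)+1) * PowerSeries.coeff (j+1) (dsum (genFun s))
      = ((∑ d ∈ (j+1).divisors, d * Nat.card {a : α // s a = d} : ℕ) : ℚ) := by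
  rw [dsum, PowerSeries.coeff_mk, Finset.mul_sum]
  push_cast
  rw [← Nat.sum_div_divisors (j+1) (fun d => (d : ℚ) * (Nat.card {a : α // s a = d} : ℚ))]
  apply Finset.sum_congr rfl
  intro k hk
  have hk' := hk
  rw [Nat.mem_divisors] at hk'
  have hk0 : 0 < k := Nat.pos_of_mem_divisors hk
  rw [genFun, PowerSeries.coeff_mk]
  have hcast : (((j+1)/k : ℕ) : ℚ) = ((j:ℚ)+1) / (k:ℚ) := by
    rw [Nat.cast_div hk'.1 (by exact_mod_cast hk0.ne')]
    push_cast; ring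
  rw [hcast]
  field_simp

end Aux

/-- The generating function for all finite multisets, counted by total size, equals
`exp(∑_{k≥1} A(x^k)/k)`, provided every element has positive size. -/
theorem multiset_genFun_eq_exp {α : Type*} (s : α → ℕ)
    (hfin : ∀ n : ℕ, Finite {a : α // s a = n}) (hpos : ∀ a : α, 0 < s a) :
    (PowerSeries.mk fun n => (Nat.card {m : Multiset α // (m.map s).sum = n} : ℚ))
      = expPS (dsum (genFun s)) := by
  classical
  have hG0 : constantCoeff (dsum (genFun s)) = 0 := dsum_constantCoeff _
  ext n
  rw [PowerSeries.coeff_mk]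
  induction n using Nat.strong_induction_on with
  | _ n ih =>
    rcases n with _ | k
    · rw [L_zero s hpos, expPS_zero_coeff]
      norm_num
    · have hrecE := expPS_recurrence hG0 k
      have hrecL := comb s hfin hpos (k+1)
      have hrecLQ : ((k:ℚ)+1) * (Nat.card {m : Multiset α // (m.map s).sum = k+1} : ℚ)
          = ∑ j ∈ Finset.range (k+1),
              ((∑ d ∈ (j+1).divisors, d * Nat.card {a : α // s a = d} : ℕ) : ℚ)
                * (Nat.card {m : Multiset α // (m.map s).sum = (k+1) - (j+1)} : ℚ) := by
        exact_mod_cast congrArg (Nat.cast : ℕ → ℚ) hrecL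
      have hcancel : ((k:ℚ)+1) ≠ 0 := by positivity
      apply mul_left_cancel₀ hcancel
      rw [hrecLQ, hrecE]
      apply Finset.sum_congr rfl
      intro j hj
      rw [Finset.mem_range] at hj
      rw [dsum_coeff_succ s j, show (k+1) - (j+1) = k - j from Nat.succ_sub_succ k j,
        ih (k - j) (by omega)]
end

section
/- Dissymmetry theorem for trees: for any finite tree T, there is a bijection from the disjoint union of the set of vertices of T and the set of edges of T to the disjoint union of {T} and the set of incident vertex–edge pairs of T, which is natural with respect to isomorphisms of trees (i.e., commutes with the action of any isomorphism). -/
open SimpleGraph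

/-- An incident vertex–edge pair of a graph. -/
def TreeFlag {V : Type*} (G : SimpleGraph V) : Type _ :=
  {p : V × G.edgeSet // p.1 ∈ (p.2 : Sym2 V)}

/-- The action of a graph isomorphism on incident vertex–edge pairs. -/
def flagMap {V₁ V₂ : Type*} {G₁ : SimpleGraph V₁} {G₂ : SimpleGraph V₂}
    (α : G₁ ≃g G₂) (p : TreeFlag G₁) : TreeFlag G₂ :=
  ⟨(α p.1.1, α.mapEdgeSet p.1.2), by
    show α p.1.1 ∈ Sym2.map α (p.1.2 : Sym2 V₁)
    rw [Sym2.mem_map]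
    exact ⟨p.1.1, p.2, rfl⟩⟩

namespace Dissym

variable {V : Type} {G : SimpleGraph V}

lemma path_length (hT : G.IsTree) {u v : V} {p : G.Walk u v} (hp : p.IsPath) :
    p.length = G.dist u v := by
  obtain ⟨q, hq, hql⟩ := hT.isConnected.exists_path_of_dist u v
  rw [(hT.existsUnique_path u v).unique hp hq, hql]

lemma dist_adj_ne (hT : G.IsTree) {v w : V} (hadj : G.Adj v w) (u : V) :
    G.dist u v ≠ G.dist u w := by
  classical
  intro he
  obtain ⟨p, hp, hpl⟩ := hT.isConnected.exists_path_of_dist u v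
  by_cases hw : w ∈ p.support
  · have h1 : (p.takeUntil w hw).length = G.dist u w := path_length hT (hp.takeUntil hw)
    have h2 := congrArg SimpleGraph.Walk.length (p.take_spec hw)
    rw [SimpleGraph.Walk.length_append] at h2
    have h0 : (p.dropUntil w hw).length = 0 := by omega
    exact hadj.ne' (SimpleGraph.Walk.eq_of_length_eq_zero h0)
  · have hq : (p.concat hadj).IsPath := by
      rw [SimpleGraph.Walk.isPath_def, SimpleGraph.Walk.support_concat,
        List.nodup_append]
      exact ⟨hp.support_nodup, List.nodup_singleton w, fun a ha b hb hab => hw (by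
        rw [List.mem_singleton] at hb; rw [← hb, ← hab]; exact ha)⟩
    have := path_length hT hq
    rw [SimpleGraph.Walk.length_concat] at this
    omega

lemma dist_adj_cases (hT : G.IsTree) {v w : V} (hadj : G.Adj v w) (u : V) :
    G.dist u w = G.dist u v + 1 ∨ G.dist u v = G.dist u w + 1 := by
  have h1 : G.dist v w = 1 := dist_eq_one_iff_adj.2 hadj
  have h2 : G.dist w v = 1 := dist_eq_one_iff_adj.2 hadj.symm
  have t1 := hT.isConnected.dist_triangle (u := u) (v := v) (w := w)
  have t2 := hT.isConnected.dist_triangle (u := u) (v := w) (w := v)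
  have hne := dist_adj_ne hT hadj u
  omega

lemma closer_nbr_unique (hT : G.IsTree) {v w₁ w₂ u : V} (h1 : G.Adj v w₁) (h2 : G.Adj v w₂)
    (d1 : G.dist u w₁ + 1 = G.dist u v) (d2 : G.dist u w₂ + 1 = G.dist u v) : w₁ = w₂ := by
  obtain ⟨p₁, hp₁, hl₁⟩ := hT.isConnected.exists_path_of_dist u w₁
  obtain ⟨p₂, hp₂, hl₂⟩ := hT.isConnected.exists_path_of_dist u w₂
  have hq₁ : (p₁.concat h1.symm).IsPath := by
    apply SimpleGraph.Walk.isPath_of_length_eq_dist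
    rw [SimpleGraph.Walk.length_concat, hl₁, d1]
  have hq₂ : (p₂.concat h2.symm).IsPath := by
    apply SimpleGraph.Walk.isPath_of_length_eq_dist
    rw [SimpleGraph.Walk.length_concat, hl₂, d2]
  have := (hT.existsUnique_path u v).unique hq₁ hq₂
  obtain ⟨hv, -⟩ := SimpleGraph.Walk.concat_inj this
  exact hv

/-- The set of vertices strictly closer to `w` than to `v`. -/
def sideSet (G : SimpleGraph V) (v w : V) : Set V := {u | G.dist u w < G.dist u v}

/-- The number of vertices strictly closer to `w` than to `v`. -/
noncomputable def sside (G : SimpleGraph V) (v w : V) : ℕ := (sideSet G v w).ncard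

/-- `w` is a neighbour of `v` whose side contains at least half of all vertices. -/
def down (G : SimpleGraph V) (v w : V) : Prop :=
  G.Adj v w ∧ Nat.card V ≤ 2 * sside G v w

/-- The side of `w` opposite to `v` has strictly less than half of all vertices. -/
def low (G : SimpleGraph V) (v w : V) : Prop := 2 * sside G v w < Nat.card V

lemma mem_sideSet (hT : G.IsTree) {v w : V} (hadj : G.Adj v w) {u : V} :
    u ∈ sideSet G v w ↔ G.dist u w + 1 = G.dist u v := by
  rcases dist_adj_cases hT hadj u with h | h <;>
    simp only [sideSet, Set.mem_setOf_eq] <;> omega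

lemma sside_add [Finite V] (hT : G.IsTree) {v w : V} (hadj : G.Adj v w) :
    sside G v w + sside G w v = Nat.card V := by
  have hdisj : Disjoint (sideSet G v w) (sideSet G w v) := by
    rw [Set.disjoint_left]
    intro u h1 h2
    simp only [sideSet, Set.mem_setOf_eq] at h1 h2
    omega
  have hunion : sideSet G v w ∪ sideSet G w v = Set.univ := by
    ext u
    simp only [sideSet, Set.mem_union, Set.mem_setOf_eq, Set.mem_univ, iff_true]
    have := dist_adj_ne hT hadj u
    omega
  rw [sside, sside, ← Set.ncard_union_eq hdisj (Set.toFinite _) (Set.toFinite _), hunion,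
    Set.ncard_univ]

lemma down_unique [Finite V] (hT : G.IsTree) {v w₁ w₂ : V} (h1 : down G v w₁)
    (h2 : down G v w₂) : w₁ = w₂ := by
  by_contra hne
  obtain ⟨ha1, hs1⟩ := h1
  obtain ⟨ha2, hs2⟩ := h2
  have hdisj : Disjoint (sideSet G v w₁) (sideSet G v w₂) := by
    rw [Set.disjoint_left]
    intro u hu1 hu2
    rw [mem_sideSet hT ha1] at hu1
    rw [mem_sideSet hT ha2] at hu2
    exact hne (closer_nbr_unique hT ha1 ha2 hu1 hu2)
  have hv1 : v ∉ sideSet G v w₁ ∪ sideSet G v w₂ := by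
    simp only [sideSet, Set.mem_union, Set.mem_setOf_eq, SimpleGraph.dist_self]
    omega
  have hlt : (sideSet G v w₁ ∪ sideSet G v w₂).ncard < Nat.card V := by
    rw [← Set.ncard_univ]
    apply Set.ncard_lt_ncard _ (Set.toFinite _)
    exact ⟨Set.subset_univ _, fun hsub => hv1 (hsub (Set.mem_univ v))⟩
  rw [Set.ncard_union_eq hdisj (Set.toFinite _) (Set.toFinite _)] at hlt
  unfold sside at *
  omega

lemma low_unique [Finite V] (hT : G.IsTree) {e : G.edgeSet} {a b a' b' : V}
    (h : (e : Sym2 V) = s(a, b)) (h' : (e : Sym2 V) = s(a', b'))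
    (hl : low G a b) (hl' : low G a' b') : a = a' := by
  have hadj : G.Adj a b := G.mem_edgeSet.1 (h ▸ e.2)
  rw [h, Sym2.eq_iff] at h'
  rcases h' with ⟨rfl, rfl⟩ | ⟨rfl, rfl⟩
  · rfl
  · exfalso
    have := sside_add hT hadj
    unfold low at hl hl'
    omega

open Classical in
/-- The canonical map from vertices and edges to the one-point set plus flags. -/
noncomputable def fwd (G : SimpleGraph V) : V ⊕ G.edgeSet → Unit ⊕ TreeFlag G
  | Sum.inl v =>
    if h : ∃ w, down G v w then
      Sum.inr ⟨(v, ⟨s(v, h.choose), G.mem_edgeSet.2 h.choose_spec.1⟩), Sym2.mem_mk_left _ _⟩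
    else Sum.inl ()
  | Sum.inr e =>
    if h : ∃ vw : V × V, (e : Sym2 V) = s(vw.1, vw.2) ∧ low G vw.1 vw.2 then
      Sum.inr ⟨(h.choose.1, e), by
        have hm := Sym2.mem_mk_left h.choose.1 h.choose.2
        rw [← h.choose_spec.1] at hm
        exact hm⟩
    else Sum.inl ()

lemma sum_dist_add [Fintype V] (hT : G.IsTree) {v w : V} (hadj : G.Adj v w) :
    (∑ u, G.dist u v) + sside G w v = (∑ u, G.dist u w) + sside G v w := by
  classical
  have key : ∀ u : V, G.dist u v + (if G.dist u v < G.dist u w then 1 else 0)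
      = G.dist u w + (if G.dist u w < G.dist u v then 1 else 0) := by
    intro u
    rcases dist_adj_cases hT hadj u with h | h <;> split_ifs <;> omega
  have hs : ∀ (a b : V), sside G a b = ∑ u, (if G.dist u b < G.dist u a then 1 else 0) := by
    intro a b
    rw [sside, ← Nat.card_coe_set_eq, Nat.card_eq_fintype_card, sideSet,
      Fintype.card_subtype, Finset.card_filter]
    exact Finset.sum_congr rfl fun u _ => by convert rfl; exact Iff.rfl
  rw [hs, hs, ← Finset.sum_add_distrib, ← Finset.sum_add_distrib]
  exact Finset.sum_congr rfl fun u _ => key u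

lemma fwd_surjective [Finite V] (hT : G.IsTree) : Function.Surjective (fwd G) := by
  classical
  rintro (⟨⟩ | p)
  · haveI := Fintype.ofFinite V
    have hne : (Finset.univ : Finset V).Nonempty := by
      have := hT.isConnected.nonempty
      exact Finset.univ_nonempty
    obtain ⟨v, -, hmin⟩ := Finset.exists_min_image Finset.univ (fun v => ∑ u, G.dist u v) hne
    by_cases h : ∃ w, down G v w
    · obtain ⟨w, hadj, hbig⟩ := h
      have hsum := sum_dist_add hT hadj
      have hmw := hmin w (Finset.mem_univ w)
      have hss := sside_add hT hadj
      refine ⟨Sum.inr ⟨s(v, w), G.mem_edgeSet.2 hadj⟩, ?_⟩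
      rw [fwd, dif_neg]
      rintro ⟨⟨a, b⟩, hpair, hlow⟩
      simp only at hpair
      rw [Sym2.eq_iff] at hpair
      unfold low at hlow
      have hss2 := sside_add hT hadj.symm
      rcases hpair with ⟨rfl, rfl⟩ | ⟨rfl, rfl⟩ <;> simp only at hlow <;> omega
    · exact ⟨Sum.inl v, by rw [fwd, dif_neg h]⟩
  · obtain ⟨⟨v, e⟩, hm⟩ := p
    have hsp := Sym2.other_spec hm
    set w := Sym2.Mem.other hm with hw
    have hadj : G.Adj v w := G.mem_edgeSet.1 (by rw [hsp]; exact e.2)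
    by_cases hbig : Nat.card V ≤ 2 * sside G v w
    · refine ⟨Sum.inl v, ?_⟩
      have h : ∃ w', down G v w' := ⟨w, hadj, hbig⟩
      rw [fwd, dif_pos h]
      have hcw : h.choose = w := down_unique hT h.choose_spec ⟨hadj, hbig⟩
      have he : (⟨s(v, h.choose), G.mem_edgeSet.2 h.choose_spec.1⟩ : G.edgeSet) = e := by
        apply Subtype.ext
        simp only
        rw [hcw]
        exact hsp
      apply congrArg Sum.inr
      apply Subtype.ext
      simp only [he]
    · have hlow : low G v w := by unfold low at *; omega
      refine ⟨Sum.inr e, ?_⟩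
      have h : ∃ vw : V × V, (e : Sym2 V) = s(vw.1, vw.2) ∧ low G vw.1 vw.2 :=
        ⟨(v, w), hsp.symm, hlow⟩
      rw [fwd, dif_pos h]
      have hc1 : h.choose.1 = v := low_unique hT h.choose_spec.1 hsp.symm h.choose_spec.2 hlow
      apply congrArg Sum.inr
      apply Subtype.ext
      simp only [Prod.mk.injEq, and_true]
      exact hc1

/-- Flags are pairs of an edge and an endpoint of it. -/
def flagEquiv (G : SimpleGraph V) : TreeFlag G ≃ Σ e : G.edgeSet, {v : V // v ∈ (e : Sym2 V)} where
  toFun p := ⟨p.1.2, ⟨p.1.1, p.2⟩⟩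
  invFun q := ⟨(q.2.1, q.1), q.2.2⟩
  left_inv := fun ⟨⟨_, _⟩, _⟩ => rfl
  right_inv := fun ⟨_, _, _⟩ => rfl

lemma card_endpoints (e : G.edgeSet) : Nat.card {v : V // v ∈ (e : Sym2 V)} = 2 := by
  obtain ⟨e, he⟩ := e
  induction e with
  | _ a b =>
    have hne : a ≠ b := (G.mem_edgeSet.1 he).ne
    have : Nat.card {v : V // v ∈ (s(a, b) : Sym2 V)} = Nat.card ({a, b} : Set V) := by
      apply Nat.card_congr
      apply Equiv.subtypeEquivRight
      intro v
      simp [Sym2.mem_iff]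
    rw [this, Nat.card_coe_set_eq, Set.ncard_pair hne]

instance [Finite V] : Finite (TreeFlag G) := by
  unfold TreeFlag; infer_instance

lemma card_flag [Finite V] : Nat.card (TreeFlag G) = 2 * Nat.card G.edgeSet := by
  classical
  haveI := Fintype.ofFinite V
  rw [Nat.card_congr (flagEquiv G)]
  haveI : ∀ e : G.edgeSet, Fintype {v : V // v ∈ (e : Sym2 V)} := fun _ => Fintype.ofFinite _
  rw [Nat.card_eq_fintype_card, Fintype.card_sigma]
  have h2 : ∀ e : G.edgeSet, Fintype.card {v : V // v ∈ (e : Sym2 V)} = 2 := by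
    intro e
    rw [← Nat.card_eq_fintype_card, card_endpoints]
  simp only [h2, Finset.sum_const, smul_eq_mul, Finset.card_univ, Nat.card_eq_fintype_card]
  ring

lemma card_edges [Finite V] (hT : G.IsTree) : Nat.card G.edgeSet + 1 = Nat.card V := by
  classical
  haveI := Fintype.ofFinite V
  have h := hT.card_edgeFinset
  rw [Nat.card_eq_fintype_card, Nat.card_eq_fintype_card, ← Set.toFinset_card]
  exact h

lemma fwd_bijective [Finite V] (hT : G.IsTree) : Function.Bijective (fwd G) := by
  rw [Nat.bijective_iff_surjective_and_card]
  refine ⟨fwd_surjective hT, ?_⟩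
  have h1 := card_edges hT
  haveI := hT.isConnected.nonempty
  have h2 : 0 < Nat.card V := Nat.card_pos
  rw [Nat.card_sum, Nat.card_sum, card_flag, show Nat.card Unit = 1 from Nat.card_unique]
  omega

section Naturality

variable {V₁ V₂ : Type} {G₁ : SimpleGraph V₁} {G₂ : SimpleGraph V₂}

lemma dist_map (α : G₁ ≃g G₂) (hc : G₁.Connected) (u v : V₁) :
    G₂.dist (α u) (α v) = G₁.dist u v := by
  obtain ⟨p, hp⟩ := hc.exists_walk_length_eq_dist u v
  have h1 : G₂.dist (α u) (α v) ≤ G₁.dist u v := by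
    rw [← hp, ← SimpleGraph.Walk.length_map (f := α.toHom)]
    exact SimpleGraph.dist_le _
  have hr : G₂.Reachable (α u) (α v) := ⟨p.map α.toHom⟩
  obtain ⟨q, hq⟩ := hr.exists_walk_length_eq_dist
  have h2 : G₁.dist u v ≤ G₂.dist (α u) (α v) := by
    have := SimpleGraph.dist_le (q.map α.symm.toHom)
    rw [SimpleGraph.Walk.length_map, hq] at this
    simpa using this
  omega

lemma sside_map (α : G₁ ≃g G₂) (hc : G₁.Connected) (v w : V₁) :
    sside G₂ (α v) (α w) = sside G₁ v w := by
  rw [sside, sside, ← Nat.card_coe_set_eq, ← Nat.card_coe_set_eq]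
  refine Nat.card_congr (Equiv.subtypeEquiv α.toEquiv fun u => ?_).symm
  show G₁.dist u w < G₁.dist u v ↔ G₂.dist (α u) (α w) < G₂.dist (α u) (α v)
  rw [dist_map α hc, dist_map α hc]

lemma natCard_map (α : G₁ ≃g G₂) : Nat.card V₂ = Nat.card V₁ :=
  Nat.card_congr α.toEquiv.symm

lemma down_map (α : G₁ ≃g G₂) (hc : G₁.Connected) (v : V₁) (w : V₂) :
    down G₂ (α v) w ↔ down G₁ v (α.symm w) := by
  unfold down
  rw [natCard_map α]
  constructor
  · rintro ⟨hadj, hs⟩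
    have h1 : G₁.Adj v (α.symm w) := by
      rw [← α.map_adj_iff]
      simpa using hadj
    have h2 : sside G₂ (α v) w = sside G₁ v (α.symm w) := by
      conv_lhs => rw [show w = α (α.symm w) by simp]
      exact sside_map α hc v (α.symm w)
    exact ⟨h1, by omega⟩
  · rintro ⟨hadj, hs⟩
    have h1 : G₂.Adj (α v) w := by
      have := α.map_adj_iff.2 hadj
      simpa using this
    have h2 : sside G₂ (α v) w = sside G₁ v (α.symm w) := by
      conv_lhs => rw [show w = α (α.symm w) by simp]
      exact sside_map α hc v (α.symm w)
    exact ⟨h1, by omega⟩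

lemma mapEdgeSet_coe (α : G₁ ≃g G₂) (e : G₁.edgeSet) :
    (α.mapEdgeSet e : Sym2 V₂) = Sym2.map α (e : Sym2 V₁) := rfl

lemma down_map' (α : G₁ ≃g G₂) (hc : G₁.Connected) (v w : V₁) :
    down G₂ (α v) (α w) ↔ down G₁ v w := by
  rw [down_map α hc v (α w)]
  simp

lemma low_map' (α : G₁ ≃g G₂) (hc : G₁.Connected) (v w : V₁) :
    low G₂ (α v) (α w) ↔ low G₁ v w := by
  unfold low
  rw [natCard_map α, sside_map α hc]

lemma sym2_unmap (α : G₁ ≃g G₂) {e : Sym2 V₁} {a b : V₂}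
    (h : Sym2.map (⇑α) e = s(a, b)) : e = s(α.symm a, α.symm b) := by
  have := congrArg (Sym2.map (⇑α.symm)) h
  rw [Sym2.map_map, Sym2.map_pair_eq] at this
  simpa using this

lemma fwd_natural [Finite V₁] (t₁ : G₁.IsTree) (t₂ : G₂.IsTree) (α : G₁ ≃g G₂)
    (x : V₁ ⊕ G₁.edgeSet) :
    fwd G₂ (Sum.map (⇑α) (⇑α.mapEdgeSet) x) = Sum.map id (flagMap α) (fwd G₁ x) := by
  haveI : Finite V₂ := Finite.of_equiv V₁ α.toEquiv
  have hc := t₁.isConnected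
  cases x with
  | inl v =>
    simp only [Sum.map_inl, fwd]
    by_cases h1 : ∃ w, down G₁ v w
    · have h2 : ∃ w, down G₂ (α v) w := by
        obtain ⟨w, hw⟩ := h1
        exact ⟨α w, (down_map' α hc v w).2 hw⟩
      rw [dif_pos h2, dif_pos h1]
      show Sum.inr _ = Sum.inr (flagMap α _)
      apply congrArg
      have hch : h2.choose = α h1.choose := by
        apply down_unique t₂ h2.choose_spec
        exact (down_map' α hc v h1.choose).2 h1.choose_spec
      apply Subtype.ext
      simp only [flagMap, Prod.mk.injEq, true_and]
      apply Subtype.ext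
      show s(α v, h2.choose) = Sym2.map (⇑α) s(v, h1.choose)
      rw [hch, Sym2.map_pair_eq]
    · have h2 : ¬∃ w, down G₂ (α v) w := by
        rintro ⟨w, hw⟩
        refine h1 ⟨α.symm w, ?_⟩
        have := (down_map' α hc v (α.symm w)).1
        simp only [RelIso.apply_symm_apply] at this
        exact this hw
      rw [dif_neg h2, dif_neg h1]
      rfl
  | inr e =>
    simp only [Sum.map_inr, fwd]
    by_cases h1 : ∃ vw : V₁ × V₁, (e : Sym2 V₁) = s(vw.1, vw.2) ∧ low G₁ vw.1 vw.2
    · have h2 : ∃ vw : V₂ × V₂,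
          (α.mapEdgeSet e : Sym2 V₂) = s(vw.1, vw.2) ∧ low G₂ vw.1 vw.2 := by
        obtain ⟨⟨a, b⟩, hpair, hlow⟩ := h1
        refine ⟨(α a, α b), ?_, (low_map' α hc a b).2 hlow⟩
        rw [mapEdgeSet_coe, hpair, Sym2.map_pair_eq]
      rw [dif_pos h2, dif_pos h1]
      show Sum.inr _ = Sum.inr (flagMap α _)
      apply congrArg
      have hpair2 : (α.mapEdgeSet e : Sym2 V₂) = s(α h1.choose.1, α h1.choose.2) := by
        rw [mapEdgeSet_coe]
        conv_lhs => rw [h1.choose_spec.1]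
        rw [Sym2.map_pair_eq]
      have hch : h2.choose.1 = α h1.choose.1 := by
        apply low_unique t₂ (e := α.mapEdgeSet e) h2.choose_spec.1 hpair2 h2.choose_spec.2
        exact (low_map' α hc h1.choose.1 h1.choose.2).2 h1.choose_spec.2
      apply Subtype.ext
      simp only [flagMap, Prod.mk.injEq, and_true]
      exact hch
    · have h2 : ¬∃ vw : V₂ × V₂,
          (α.mapEdgeSet e : Sym2 V₂) = s(vw.1, vw.2) ∧ low G₂ vw.1 vw.2 := by
        rintro ⟨⟨a, b⟩, hpair, hlow⟩
        rw [mapEdgeSet_coe] at hpair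
        refine h1 ⟨(α.symm a, α.symm b), sym2_unmap α hpair, ?_⟩
        have := (low_map' α hc (α.symm a) (α.symm b)).1
        simp only [RelIso.apply_symm_apply] at this
        exact this hlow
      rw [dif_neg h2, dif_neg h1]
      rfl

end Naturality

end Dissym

/-- Dissymmetry theorem for trees. -/
theorem dissymmetry_theorem :
    ∃ Φ : ∀ (V : Type) (G : SimpleGraph V), Fintype V → G.IsTree →
        ((V ⊕ G.edgeSet) ≃ (Unit ⊕ TreeFlag G)),
      ∀ (V₁ V₂ : Type) (G₁ : SimpleGraph V₁) (G₂ : SimpleGraph V₂)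
        (h₁ : Fintype V₁) (h₂ : Fintype V₂) (t₁ : G₁.IsTree) (t₂ : G₂.IsTree)
        (α : G₁ ≃g G₂) (x : V₁ ⊕ G₁.edgeSet),
        Φ V₂ G₂ h₂ t₂ (Sum.map (⇑α) (⇑α.mapEdgeSet) x)
          = Sum.map id (flagMap α) (Φ V₁ G₁ h₁ t₁ x) := by
  refine ⟨fun V G h t => letI := h; Equiv.ofBijective (Dissym.fwd G) (Dissym.fwd_bijective t), ?_⟩
  intro V₁ V₂ G₁ G₂ h₁ h₂ t₁ t₂ α x
  letI := h₁
  exact Dissym.fwd_natural t₁ t₂ α x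
end

section
/- For any finite tree T with v vertices and e edges and automorphism group G, the number of G-orbits of vertices plus the number of G-orbits of edges equals 1 plus the number of G-orbits of incident vertex–edge pairs. -/
open SimpleGraph

/-- Orbits of the automorphism group on vertices. -/
def vertexOrbitSetoid {V : Type*} (G : SimpleGraph V) : Setoid V where
  r u v := ∃ φ : G ≃g G, φ u = v
  iseqv := by
    refine ⟨fun v => ⟨Iso.refl, rfl⟩, fun ⟨φ, h⟩ => ⟨φ.symm, ?_⟩,
      fun ⟨φ, h⟩ ⟨ψ, h'⟩ => ⟨φ.trans ψ, ?_⟩⟩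
    · rw [← h]; exact φ.symm_apply_apply _
    · show ψ (φ _) = _; rw [h, h']

/-- Orbits of the automorphism group on edges. -/
def edgeOrbitSetoid {V : Type*} (G : SimpleGraph V) : Setoid G.edgeSet where
  r e f := ∃ φ : G ≃g G, Sym2.map φ (e : Sym2 V) = (f : Sym2 V)
  iseqv := by
    refine ⟨fun e => ⟨Iso.refl, congrFun Sym2.map_id' _⟩, fun ⟨φ, h⟩ => ⟨φ.symm, ?_⟩,
      fun ⟨φ, h⟩ ⟨ψ, h'⟩ => ⟨φ.trans ψ, ?_⟩⟩
    · rw [← h, Sym2.map_map]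
      have hid : (⇑φ.symm ∘ ⇑φ) = id := by funext x; simp
      rw [hid, Sym2.map_id]; rfl
    · rw [← h', ← h, Sym2.map_map]; rfl

/-- Orbits of the automorphism group on incident vertex–edge pairs. -/
def flagOrbitSetoid {V : Type*} (G : SimpleGraph V) :
    Setoid {p : V × G.edgeSet // p.1 ∈ (p.2 : Sym2 V)} where
  r p q := ∃ φ : G ≃g G,
    φ p.1.1 = q.1.1 ∧ Sym2.map φ (p.1.2 : Sym2 V) = (q.1.2 : Sym2 V)
  iseqv := by
    refine ⟨fun p => ⟨Iso.refl, rfl, congrFun Sym2.map_id' _⟩,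
      fun ⟨φ, h1, h2⟩ => ⟨φ.symm, ?_, ?_⟩,
      fun ⟨φ, h1, h2⟩ ⟨ψ, h1', h2'⟩ => ⟨φ.trans ψ, ?_, ?_⟩⟩
    · rw [← h1]; exact φ.symm_apply_apply _
    · rw [← h2, Sym2.map_map]
      have hid : (⇑φ.symm ∘ ⇑φ) = id := by funext x; simp
      rw [hid, Sym2.map_id]; rfl
    · show ψ (φ _) = _; rw [h1, h1']
    · rw [← h2', ← h2, Sym2.map_map]; rfl

namespace OrbitTreeAux

variable {V : Type*} [DecidableEq V] {G : SimpleGraph V}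

/-- The canonical path between two vertices of a tree. -/
noncomputable def pw (hG : G.IsTree) (u v : V) : G.Walk u v :=
  ((hG.isConnected.preconnected u v).some.toPath : G.Path u v).1

lemma pw_isPath (hG : G.IsTree) (u v : V) : (pw hG u v).IsPath :=
  ((hG.isConnected.preconnected u v).some.toPath).2

lemma pw_unique (hG : G.IsTree) {u v : V} (p : G.Walk u v) (hp : p.IsPath) :
    p = pw hG u v := by
  have := hG.IsAcyclic.path_unique ⟨p, hp⟩ ⟨pw hG u v, pw_isPath hG u v⟩
  exact congrArg Subtype.val this

lemma pw_self (hG : G.IsTree) (u : V) : pw hG u u = Walk.nil :=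
  (pw_unique hG Walk.nil (by simp)).symm

lemma pw_adj (hG : G.IsTree) {u v : V} (h : G.Adj u v) :
    pw hG u v = Walk.cons h Walk.nil :=
  (pw_unique hG _ (by simp [h.ne])).symm

lemma pw_map (hG : G.IsTree) (φ : G ≃g G) (u v : V) :
    (pw hG u v).map φ.toHom = pw hG (φ u) (φ v) :=
  pw_unique hG _ (Walk.map_isPath_of_injective φ.toEquiv.injective (pw_isPath hG u v))

omit [DecidableEq V] in
lemma getVert_map (f : G →g G) {u v : V} (p : G.Walk u v) (n : ℕ) :
    (p.map f).getVert n = f (p.getVert n) := by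
  induction p generalizing n with
  | nil => simp [Walk.getVert]
  | cons h q ih =>
    cases n with
    | zero => simp
    | succ n => simpa [Walk.getVert_cons_succ] using ih n

omit [DecidableEq V] in
lemma exists_cons_of_ne {u v : V} (h : u ≠ v) (p : G.Walk u v) :
    ∃ (w : V) (ha : G.Adj u w) (q : G.Walk w v), p = Walk.cons ha q := by
  cases p with
  | nil => exact absurd rfl h
  | cons ha q => exact ⟨_, ha, q, rfl⟩

/-- the second vertex on the canonical path from `v` to `z`. -/
noncomputable def nxt (hG : G.IsTree) (z v : V) : V := (pw hG v z).getVert 1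

lemma nxt_self (hG : G.IsTree) (z : V) : nxt hG z z = z := by
  simp [nxt, pw_self, Walk.getVert]

lemma pw_decomp (hG : G.IsTree) {v z : V} (h : v ≠ z) :
    ∃ (ha : G.Adj v (nxt hG z v)), pw hG v z = Walk.cons ha (pw hG (nxt hG z v) z) := by
  obtain ⟨w, ha, q, hq⟩ := exists_cons_of_ne h (pw hG v z)
  have hw : nxt hG z v = w := by
    rw [nxt, hq, Walk.getVert_cons_succ, Walk.getVert_zero]
  have hqp : q = pw hG w z := by
    refine pw_unique hG _ ?_
    have := pw_isPath hG v z
    rw [hq] at this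
    exact this.of_cons
  subst hw
  exact ⟨ha, by rw [hq, hqp]⟩

lemma nxt_adj (hG : G.IsTree) {v z : V} (h : v ≠ z) : G.Adj v (nxt hG z v) :=
  (pw_decomp hG h).choose

lemma pw_length_nxt (hG : G.IsTree) {v z : V} (h : v ≠ z) :
    (pw hG v z).length = (pw hG (nxt hG z v) z).length + 1 := by
  obtain ⟨ha, hd⟩ := pw_decomp hG h
  rw [hd]; simp

lemma nxt_of_adj_root (hG : G.IsTree) {v z : V} (h : G.Adj v z) : nxt hG z v = z := by
  rw [nxt, pw_adj hG h, Walk.getVert_cons_succ, Walk.getVert_zero]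

lemma nxt_of_cons (hG : G.IsTree) {a b z : V} (ha : G.Adj a b)
    (hnot : a ∉ (pw hG b z).support) : nxt hG z a = b := by
  have : pw hG a z = Walk.cons ha (pw hG b z) :=
    (pw_unique hG _ ((pw_isPath hG b z).cons hnot)).symm
  rw [nxt, this, Walk.getVert_cons_succ, Walk.getVert_zero]

lemma mem_pw_antisymm (hG : G.IsTree) {a b t : V} (hne : a ≠ b)
    (hmem : a ∈ (pw hG b t).support) : b ∉ (pw hG a t).support := by
  have hdrop : (pw hG b t).dropUntil a hmem = pw hG a t :=
    pw_unique hG _ ((pw_isPath hG b t).dropUntil hmem)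
  intro hb
  have hnd := (pw_isPath hG b t).support_nodup
  rw [← Walk.take_spec (pw hG b t) hmem, Walk.support_append] at hnd
  have hb1 : b ∈ ((pw hG b t).takeUntil a hmem).support := Walk.start_mem_support _
  have hb2 : b ∈ ((pw hG b t).dropUntil a hmem).support := hdrop.symm ▸ hb
  rw [Walk.support_eq_cons ((pw hG b t).dropUntil a hmem)] at hb2
  rw [List.mem_cons] at hb2
  rcases hb2 with hb2 | hb2
  · exact hne hb2.symm
  · exact (List.disjoint_of_nodup_append hnd) hb1 (by simpa using hb2)

/-- At least one of two adjacent vertices points to the other. -/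
lemma nxt_or (hG : G.IsTree) {a b : V} (z : V) (ha : G.Adj a b) :
    nxt hG z a = b ∨ nxt hG z b = a := by
  by_cases hmem : a ∈ (pw hG b z).support
  · exact Or.inr (nxt_of_cons hG ha.symm (mem_pw_antisymm hG ha.ne hmem))
  · exact Or.inl (nxt_of_cons hG ha hmem)

/-- At most one of two adjacent vertices (both distinct from the root) points to the other. -/
lemma nxt_not_both (hG : G.IsTree) {a b z : V} (ha : G.Adj a b)
    (h1 : nxt hG z a = b) (h2 : nxt hG z b = a) (hza : a ≠ z) (hzb : b ≠ z) : False := by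
  have l1 := pw_length_nxt hG hza
  have l2 := pw_length_nxt hG hzb
  rw [h1] at l1
  rw [h2] at l2
  omega

lemma pw_copy (hG : G.IsTree) {u u' v v' : V} (hu : u = u') (hv : v = v') :
    (pw hG u v).copy hu hv = pw hG u' v' := by
  subst hu; subst hv; rfl

lemma nxt_map' (hG : G.IsTree) (φ : G ≃g G) (z v : V) :
    nxt hG (φ z) (φ v) = φ (nxt hG z v) := by
  rw [nxt, nxt, ← pw_map hG φ, getVert_map]
  rfl

lemma nxt_map (hG : G.IsTree) (φ : G ≃g G) {z : V} (hz : φ z = z) (v : V) :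
    nxt hG z (φ v) = φ (nxt hG z v) := by
  have := nxt_map' hG φ z v
  rwa [hz] at this

lemma pw_support_map (hG : G.IsTree) (φ : G ≃g G) (u v : V) :
    (pw hG (φ u) (φ v)).support = (pw hG u v).support.map ⇑φ := by
  rw [← pw_map hG φ, Walk.support_map]
  rfl

lemma pw_support_map' (hG : G.IsTree) (φ : G ≃g G) {z z' : V} (hz : φ z = z') (v : V) :
    (pw hG (φ v) z').support = (pw hG v z).support.map ⇑φ := by
  subst hz; exact pw_support_map hG φ v z

lemma nxt_map'' (hG : G.IsTree) (φ : G ≃g G) {z z' : V} (hz : φ z = z') (v : V) :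
    nxt hG z' (φ v) = φ (nxt hG z v) := by
  subst hz; exact nxt_map' hG φ z v

lemma pw_support_nxt (hG : G.IsTree) {v z : V} (h : v ≠ z) :
    (pw hG v z).support = v :: (pw hG (nxt hG z v) z).support := by
  obtain ⟨ha, hd⟩ := pw_decomp hG h
  rw [hd, Walk.support_cons]

section EdgeRoot

variable (hG : G.IsTree) {a₀ b₀ : V} (h₀ : G.Adj a₀ b₀)
include h₀

/-- next vertex towards the root edge `{a₀, b₀}`. -/
noncomputable def nxtE (hG : G.IsTree) (a₀ b₀ v : V) : V :=
  if b₀ ∈ (pw hG v a₀).support then nxt hG a₀ v else nxt hG b₀ v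

lemma pw_length_of_mem {v : V} (hm : b₀ ∈ (pw hG v a₀).support) :
    (pw hG v a₀).length = (pw hG v b₀).length + 1 := by
  have e1 : (pw hG v a₀).takeUntil b₀ hm = pw hG v b₀ :=
    pw_unique hG _ ((pw_isPath hG v a₀).takeUntil hm)
  have e2 : (pw hG v a₀).dropUntil b₀ hm = pw hG b₀ a₀ :=
    pw_unique hG _ ((pw_isPath hG v a₀).dropUntil hm)
  have h3 := congrArg Walk.length (Walk.take_spec (pw hG v a₀) hm)
  rw [Walk.length_append, e1, e2, pw_adj hG h₀.symm] at h3
  simp only [Walk.length_cons, Walk.length_nil] at h3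
  omega

lemma not_both_mem {v : V} (h1 : b₀ ∈ (pw hG v a₀).support)
    (h2 : a₀ ∈ (pw hG v b₀).support) : False := by
  have l1 := pw_length_of_mem hG h₀ h1
  have l2 := pw_length_of_mem hG h₀.symm h2
  omega

lemma mem_of_notMem {v : V} (h : a₀ ∉ (pw hG v b₀).support) :
    b₀ ∈ (pw hG v a₀).support := by
  have hq : ((pw hG v b₀).concat h₀.symm).IsPath := by
    rw [← Walk.isPath_reverse_iff, Walk.reverse_concat, Walk.cons_isPath_iff]
    exact ⟨(pw_isPath hG v b₀).reverse, by rwa [Walk.support_reverse, List.mem_reverse]⟩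
  have he : (pw hG v b₀).concat h₀.symm = pw hG v a₀ := pw_unique hG _ hq
  rw [← he, Walk.support_concat]
  simp only [List.concat_eq_append, List.mem_append]
  exact Or.inl (Walk.end_mem_support _)

lemma side_iff (v : V) : b₀ ∈ (pw hG v a₀).support ↔ a₀ ∉ (pw hG v b₀).support :=
  ⟨fun h1 h2 => not_both_mem hG h₀ h1 h2, mem_of_notMem hG h₀⟩

lemma not_side_a₀ : b₀ ∉ (pw hG a₀ a₀).support := by
  rw [pw_self]
  simp [h₀.ne']

lemma side_b₀ : b₀ ∈ (pw hG b₀ a₀).support := Walk.start_mem_support _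

lemma ne_a₀_of_side {v : V} (hs : b₀ ∈ (pw hG v a₀).support) : v ≠ a₀ := by
  rintro rfl
  exact not_side_a₀ hG h₀ hs

lemma ne_b₀_of_not_side {v : V} (hs : b₀ ∉ (pw hG v a₀).support) : v ≠ b₀ := by
  rintro rfl
  exact hs (side_b₀ hG h₀)

lemma nxtE_a₀ : nxtE hG a₀ b₀ a₀ = b₀ := by
  rw [nxtE, if_neg (not_side_a₀ hG h₀)]
  exact nxt_of_adj_root hG h₀

lemma nxtE_b₀ : nxtE hG a₀ b₀ b₀ = a₀ := by
  rw [nxtE, if_pos (side_b₀ hG h₀)]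
  exact nxt_of_adj_root hG h₀.symm

lemma nxtE_adj (v : V) : G.Adj v (nxtE hG a₀ b₀ v) := by
  rw [nxtE]
  split_ifs with hs
  · exact nxt_adj hG (ne_a₀_of_side hG h₀ hs)
  · exact nxt_adj hG (ne_b₀_of_not_side hG h₀ hs)

lemma nxtE_or {a b : V} (ha : G.Adj a b) :
    nxtE hG a₀ b₀ a = b ∨ nxtE hG a₀ b₀ b = a := by
  by_cases hsb : b₀ ∈ (pw hG b a₀).support
  · by_cases hm : a ∈ (pw hG b a₀).support
    · refine Or.inr ?_
      rw [nxtE, if_pos hsb]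
      exact nxt_of_cons hG ha.symm (mem_pw_antisymm hG ha.ne hm)
    · refine Or.inl ?_
      have hcons : pw hG a a₀ = Walk.cons ha (pw hG b a₀) :=
        (pw_unique hG _ ((pw_isPath hG b a₀).cons hm)).symm
      have hsa : b₀ ∈ (pw hG a a₀).support := by
        rw [hcons, Walk.support_cons]
        exact List.mem_cons_of_mem _ hsb
      rw [nxtE, if_pos hsa]
      exact nxt_of_cons hG ha hm
  · by_cases hm : a ∈ (pw hG b b₀).support
    · refine Or.inr ?_
      rw [nxtE, if_neg hsb]
      exact nxt_of_cons hG ha.symm (mem_pw_antisymm hG ha.ne hm)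
    · refine Or.inl ?_
      have hb' : a₀ ∈ (pw hG b b₀).support := by
        by_contra hc
        exact hsb (mem_of_notMem hG h₀ hc)
      have hcons : pw hG a b₀ = Walk.cons ha (pw hG b b₀) :=
        (pw_unique hG _ ((pw_isPath hG b b₀).cons hm)).symm
      have hsa : a₀ ∈ (pw hG a b₀).support := by
        rw [hcons, Walk.support_cons]
        exact List.mem_cons_of_mem _ hb'
      have hsa' : b₀ ∉ (pw hG a a₀).support := fun hc => not_both_mem hG h₀ hc hsa
      rw [nxtE, if_neg hsa']
      exact nxt_of_cons hG ha hm

lemma nxtE_not_both {a b : V} (ha : G.Adj a b) (hne : s(a, b) ≠ s(a₀, b₀))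
    (h1 : nxtE hG a₀ b₀ a = b) (h2 : nxtE hG a₀ b₀ b = a) : False := by
  by_cases hsa : b₀ ∈ (pw hG a a₀).support <;>
    by_cases hsb : b₀ ∈ (pw hG b a₀).support
  · rw [nxtE, if_pos hsa] at h1
    rw [nxtE, if_pos hsb] at h2
    exact nxt_not_both hG ha h1 h2 (ne_a₀_of_side hG h₀ hsa) (ne_a₀_of_side hG h₀ hsb)
  · -- side a true, side b false
    rw [nxtE, if_pos hsa] at h1
    subst h1
    rw [pw_support_nxt hG (ne_a₀_of_side hG h₀ hsa)] at hsa
    rcases List.mem_cons.mp hsa with hc | hc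
    · subst hc
      rw [nxt_of_adj_root hG h₀.symm] at hne
      exact hne Sym2.eq_swap
    · exact hsb hc
  · -- side a false, side b true
    rw [nxtE, if_pos hsb] at h2
    subst h2
    rw [pw_support_nxt hG (ne_a₀_of_side hG h₀ hsb)] at hsb
    rcases List.mem_cons.mp hsb with hc | hc
    · subst hc
      rw [nxt_of_adj_root hG h₀.symm] at hne
      exact hne rfl
    · exact hsa hc
  · rw [nxtE, if_neg hsa] at h1
    rw [nxtE, if_neg hsb] at h2
    exact nxt_not_both hG ha h1 h2 (ne_b₀_of_not_side hG h₀ hsa) (ne_b₀_of_not_side hG h₀ hsb)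

lemma nxtE_map (φ : G ≃g G) (hfix : Sym2.map ⇑φ s(a₀, b₀) = s(a₀, b₀)) (v : V) :
    nxtE hG a₀ b₀ (φ v) = φ (nxtE hG a₀ b₀ v) := by
  have hinj : Function.Injective ⇑φ := φ.injective
  rw [Sym2.map_pair_eq, Sym2.eq_iff] at hfix
  rcases hfix with ⟨ha, hb⟩ | ⟨ha, hb⟩
  · have hside : b₀ ∈ (pw hG (φ v) a₀).support ↔ b₀ ∈ (pw hG v a₀).support := by
      rw [pw_support_map' hG φ ha, List.mem_map]
      constructor
      · rintro ⟨x, hx, hxe⟩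
        have : x = b₀ := hinj (by rw [hxe, hb])
        subst this; exact hx
      · intro hx; exact ⟨b₀, hx, hb⟩
    rw [nxtE, nxtE]
    split_ifs with hs1 hs2 hs2
    · exact nxt_map'' hG φ ha v
    · exact absurd (hside.mp hs1) hs2
    · exact absurd (hside.mpr hs2) hs1
    · exact nxt_map'' hG φ hb v
  · -- swap case
    have hside : b₀ ∈ (pw hG (φ v) a₀).support ↔ a₀ ∈ (pw hG v b₀).support := by
      rw [pw_support_map' hG φ hb, List.mem_map]
      constructor
      · rintro ⟨x, hx, hxe⟩
        have : x = a₀ := hinj (by rw [hxe, ha])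
        subst this; exact hx
      · intro hx; exact ⟨a₀, hx, ha⟩
    by_cases hs : b₀ ∈ (pw hG v a₀).support
    · have hs' : b₀ ∉ (pw hG (φ v) a₀).support := by
        rw [hside]
        exact fun hc => not_both_mem hG h₀ hs hc
      rw [nxtE, if_neg hs', nxtE, if_pos hs]
      exact nxt_map'' hG φ ha v
    · have hs' : b₀ ∈ (pw hG (φ v) a₀).support := by
        rw [hside]
        by_contra hc
        exact hs (mem_of_notMem hG h₀ hc)
      rw [nxtE, if_pos hs', nxtE, if_neg hs]
      exact nxt_map'' hG φ hb v

end EdgeRoot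

section Center

variable {V : Type*}

lemma degree_map [Fintype V] {G : SimpleGraph V} [DecidableRel G.Adj] (φ : G ≃g G) (v : V) :
    G.degree (φ v) = G.degree v := by
  rw [← card_neighborSet_eq_degree, ← card_neighborSet_eq_degree]
  exact (Fintype.card_congr (φ.mapNeighborSet v)).symm

/-- transfer a walk whose support lies in `S` to the induced graph. -/
lemma reachable_induce {G : SimpleGraph V} (S : Set V) :
    ∀ {u v : V} (p : G.Walk u v), (∀ x ∈ p.support, x ∈ S) → ∀ (hu : u ∈ S) (hv : v ∈ S),
      (G.induce S).Reachable ⟨u, hu⟩ ⟨v, hv⟩ := by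
  intro u v p
  induction p with
  | nil =>
    intro _ hu hv
    exact Reachable.refl _
  | @cons u w v h q ih =>
    intro hs hu hv
    have hw : w ∈ S := hs _ (by simp)
    have hadj : (G.induce S).Adj ⟨u, hu⟩ ⟨w, hw⟩ := h
    exact hadj.reachable.trans (ih (fun x hx => hs x (by simp [hx])) hw hv)

lemma path_support_degree [Fintype V] [DecidableEq V] {G : SimpleGraph V} [DecidableRel G.Adj] :
    ∀ {u v : V} (p : G.Walk u v), p.IsPath → 2 ≤ G.degree u → 2 ≤ G.degree v →
      ∀ x ∈ p.support, 2 ≤ G.degree x := by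
  intro u v p
  induction p with
  | nil => intro _ hu _ x hx; simp at hx; subst hx; exact hu
  | @cons u w v h q ih =>
    intro hp hu hv x hx
    rw [Walk.support_cons, List.mem_cons] at hx
    rcases hx with rfl | hx
    · exact hu
    · have hw : 2 ≤ G.degree w := by
        by_cases hwv : w = v
        · subst hwv; exact hv
        · obtain ⟨y, h2, q2, rfl⟩ := OrbitTreeAux.exists_cons_of_ne hwv q
          have huy : u ≠ y := by
            rintro rfl
            exact (Walk.cons_isPath_iff _ _).mp hp |>.2
              (by rw [Walk.support_cons]; exact List.mem_cons_of_mem _ (Walk.start_mem_support _))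
          have hsub : {u, y} ⊆ G.neighborFinset w := by
            intro t ht
            rcases Finset.mem_insert.mp ht with rfl | ht
            · exact (SimpleGraph.mem_neighborFinset _ _ _).mpr h.symm
            · rw [Finset.mem_singleton] at ht; subst ht
              exact (SimpleGraph.mem_neighborFinset _ _ _).mpr h2
          calc 2 = ({u, y} : Finset V).card := by rw [Finset.card_insert_of_notMem (by simpa using huy), Finset.card_singleton]
          _ ≤ (G.neighborFinset w).card := Finset.card_le_card hsub
          _ = G.degree w := rfl
      exact ih hp.of_cons hw hv x hx

lemma exists_center_aux : ∀ (n : ℕ) {V : Type*} [Fintype V] [DecidableEq V]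
    (G : SimpleGraph V), Fintype.card V ≤ n → G.IsTree →
    (∃ z : V, ∀ φ : G ≃g G, φ z = z) ∨
      (∃ a b : V, G.Adj a b ∧ ∀ φ : G ≃g G, Sym2.map ⇑φ s(a, b) = s(a, b)) := by
  intro n
  induction n with
  | zero =>
    intro V _ _ G hcard hG
    have : Nonempty V := hG.isConnected.nonempty
    have : 0 < Fintype.card V := Fintype.card_pos
    omega
  | succ n ih =>
    intro V _ _ G hcard hG
    haveI : DecidableRel G.Adj := Classical.decRel _
    have hne : Nonempty V := hG.isConnected.nonempty
    have hpos : 0 < Fintype.card V := Fintype.card_pos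
    by_cases h1 : Fintype.card V = 1
    · obtain ⟨z, hz⟩ := Fintype.card_eq_one_iff.mp h1
      exact Or.inl ⟨z, fun φ => (hz _).trans (hz z).symm⟩
    by_cases h2 : Fintype.card V = 2
    · -- two vertices, the unique edge is invariant
      obtain ⟨a, b, hab, hcover⟩ : ∃ a b : V, a ≠ b ∧ ∀ x : V, x = a ∨ x = b := by
        have hc2 : (Finset.univ : Finset V).card = 2 := by
          rw [Finset.card_univ]; exact h2
        obtain ⟨a, b, hab, huniv⟩ := Finset.card_eq_two.mp hc2
        refine ⟨a, b, hab, fun x => ?_⟩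
        have hx : x ∈ (Finset.univ : Finset V) := Finset.mem_univ x
        rw [huniv] at hx
        simpa using hx
      have hadj : G.Adj a b := by
        have hr := hG.isConnected.preconnected a b
        obtain ⟨w⟩ := hr
        obtain ⟨y, hy, q, rfl⟩ := OrbitTreeAux.exists_cons_of_ne hab w
        rcases hcover y with rfl | rfl
        · exact absurd rfl hy.ne
        · exact hy
      refine Or.inr ⟨a, b, hadj, fun φ => ?_⟩
      rw [Sym2.map_pair_eq, Sym2.eq_iff]
      have hALL : ∀ x : V, x = a ∨ x = b := hcover
      have hinj : Function.Injective ⇑φ := φ.injective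
      rcases hALL (φ a) with hpa | hpa <;> rcases hALL (φ b) with hpb | hpb
      · exact absurd (hinj (hpa.trans hpb.symm)) hab
      · exact Or.inl ⟨hpa, hpb⟩
      · exact Or.inr ⟨hpa, hpb⟩
      · exact absurd (hinj (hpa.trans hpb.symm)) hab
    -- at least three vertices
    have h3 : 3 ≤ Fintype.card V := by omega
    have hsum : ∑ v, G.degree v = 2 * (Fintype.card V - 1) := by
      rw [G.sum_degrees_eq_twice_card_edges]
      have := hG.card_edgeFinset
      omega
    have hleaf : ∃ v : V, G.degree v ≤ 1 := by
      by_contra hc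
      push_neg at hc
      have : ∑ v, G.degree v ≥ ∑ _v : V, 2 :=
        Finset.sum_le_sum (fun i _ => hc i)
      rw [Finset.sum_const, smul_eq_mul] at this
      simp only [Finset.card_univ] at this
      omega
    have hbig : ∃ v : V, 2 ≤ G.degree v := by
      by_contra hc
      push_neg at hc
      have : ∑ v, G.degree v ≤ ∑ _v : V, 1 :=
        Finset.sum_le_sum (fun i _ => Nat.lt_succ_iff.mp (hc i))
      rw [Finset.sum_const, smul_eq_mul] at this
      simp only [Finset.card_univ] at this
      omega
    obtain ⟨l, hl⟩ := hleaf
    obtain ⟨m, hm⟩ := hbig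
    set S : Set V := {v | 2 ≤ G.degree v} with hS
    haveI hdecS : DecidablePred (· ∈ S) := fun v => Nat.decLe _ _
    haveI hfinS : Fintype ↥S := Subtype.fintype _
    have hmS : m ∈ S := hm
    have hlS : l ∉ S := by simp [hS]; omega
    haveI : Nonempty S := ⟨⟨m, hmS⟩⟩
    have hcardS : Fintype.card S ≤ n := by
      have hlt : Fintype.card ↥S < Fintype.card V := by
        refine Fintype.card_lt_of_injective_of_notMem
          (fun x : S => (x : V)) Subtype.coe_injective (b := l) ?_
        intro hc
        obtain ⟨x, hx⟩ := hc
        exact hlS (hx ▸ x.property)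
      omega
    -- the induced graph is a tree
    have hSsupport : ∀ {u v : V}, u ∈ S → v ∈ S → ∀ x ∈ (OrbitTreeAux.pw hG u v).support, x ∈ S :=
      fun hu hv => path_support_degree _ (OrbitTreeAux.pw_isPath hG _ _) hu hv
    have hHtree : (G.induce S).IsTree := by
      constructor
      · constructor
        intro u v
        have := reachable_induce S (OrbitTreeAux.pw hG u.val v.val)
          (hSsupport u.property v.property) u.property v.property
        exact this
      · intro v c hc
        have := hc.map (f := (SimpleGraph.Embedding.induce (G := G) S).toHom)
          (SimpleGraph.Embedding.induce (G := G) S).injective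
        exact hG.IsAcyclic _ this
    -- restriction of automorphisms
    have hrestrict : ∀ φ : G ≃g G, ∀ v : V, v ∈ S ↔ φ v ∈ S := by
      intro φ v
      simp only [hS, Set.mem_setOf_eq, degree_map]
    let res : (G ≃g G) → (G.induce S ≃g G.induce S) := fun φ =>
      { toEquiv := (φ.toEquiv.subtypeEquiv (fun v => hrestrict φ v)),
        map_rel_iff' := by
          intro a b
          simpa using φ.map_rel_iff }
    rcases ih (G.induce S) hcardS hHtree with ⟨z, hz⟩ | ⟨a, b, hab, hinv⟩
    · refine Or.inl ⟨z.val, fun φ => ?_⟩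
      exact congrArg Subtype.val (hz (res φ))
    · refine Or.inr ⟨a.val, b.val, by simpa using hab, fun φ => ?_⟩
      have := hinv (res φ)
      rw [Sym2.map_pair_eq, Sym2.eq_iff] at this ⊢
      rcases this with ⟨hza, hzb⟩ | ⟨hza, hzb⟩
      · exact Or.inl ⟨congrArg Subtype.val hza, congrArg Subtype.val hzb⟩
      · exact Or.inr ⟨congrArg Subtype.val hza, congrArg Subtype.val hzb⟩

end Center

end OrbitTreeAux


open OrbitTreeAux in
/-- Counting lemma in the case of an invariant vertex. -/
lemma count_center_vertex {V : Type*} [Fintype V] [DecidableEq V] (G : SimpleGraph V)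
    (hG : G.IsTree) {z : V} (hz : ∀ φ : G ≃g G, φ z = z) :
    Nat.card (Quotient (vertexOrbitSetoid G)) + Nat.card (Quotient (edgeOrbitSetoid G))
      = 1 + Nat.card (Quotient (flagOrbitSetoid G)) := by
  classical
  set F := {p : V × G.edgeSet // p.1 ∈ (p.2 : Sym2 V)} with hF
  -- the "child" condition for a flag
  let cond : V → G.edgeSet → Prop := fun v e => v ≠ z ∧ s(v, nxt hG z v) = (e : Sym2 V)
  have hK4 : ∀ (φ : G ≃g G) (v : V), φ v = z → v = z := by
    intro φ v hv
    have h := (φ.symm_apply_apply v).symm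
    rw [hv, hz φ.symm] at h
    exact h
  have hK5 : ∀ (φ : G ≃g G) (v : V) (e : G.edgeSet), cond v e →
      (φ v ≠ z ∧ s(φ v, nxt hG z (φ v)) = Sym2.map ⇑φ (e : Sym2 V)) := by
    intro φ v e ⟨h1, h2⟩
    refine ⟨fun hc => h1 (hK4 φ v hc), ?_⟩
    rw [nxt_map hG φ (hz φ) v, ← Sym2.map_pair_eq, h2]
  -- at most one child per edge
  have hK2 : ∀ (e : G.edgeSet) (v w : V), v ∈ (e : Sym2 V) → w ∈ (e : Sym2 V) → v ≠ w →
      cond v e → cond w e → False := by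
    intro e v w hv hw hvw ⟨hv1, hv2⟩ ⟨hw1, hw2⟩
    have hwmem : w ∈ s(v, nxt hG z v) := hv2 ▸ hw
    have hvmem : v ∈ s(w, nxt hG z w) := hw2 ▸ hv
    rw [Sym2.mem_iff] at hwmem hvmem
    have h1 : nxt hG z v = w := ((hwmem.resolve_left (Ne.symm hvw))).symm
    have h2 : nxt hG z w = v := ((hvmem.resolve_left hvw)).symm
    exact nxt_not_both hG (h1 ▸ nxt_adj hG hv1) h1 h2 hv1 hw1
  -- if a flag is not a child flag, the other endpoint is a child of the edge
  have hK3 : ∀ (e : G.edgeSet) (v : V) (hv : v ∈ (e : Sym2 V)), ¬cond v e →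
      cond (Sym2.Mem.other hv) e := by
    intro e v hv hnc
    set w := Sym2.Mem.other hv with hw
    have hsp : s(v, w) = (e : Sym2 V) := Sym2.other_spec hv
    have hadj : G.Adj v w := by
      rw [← SimpleGraph.mem_edgeSet, hsp]
      exact e.property
    rcases nxt_or hG z hadj with hn | hn
    · -- nxt v = w : then v must be z
      have hvz : v = z := by
        by_contra hvz
        exact hnc ⟨hvz, by rw [hn, hsp]⟩
      subst hvz
      refine ⟨hadj.ne', ?_⟩
      rw [nxt_of_adj_root hG (by exact hadj.symm), Sym2.eq_swap, hsp]
    · -- nxt w = v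
      have hwz : w ≠ z := by
        rintro rfl
        exact hnc ⟨hadj.ne, by rw [nxt_of_adj_root hG hadj, hsp]⟩
      exact ⟨hwz, by rw [hn, Sym2.eq_swap, hsp]⟩
  -- uniqueness of the non-child endpoint
  have hK6 : ∀ (e : G.edgeSet) (v w : V) (hv : v ∈ (e : Sym2 V)), w ∈ (e : Sym2 V) →
      ¬cond v e → ¬cond w e → v = w := by
    intro e v w hv hw hnv hnw
    have hc := hK3 e v hv hnv
    have hsp : s(v, Sym2.Mem.other hv) = (e : Sym2 V) := Sym2.other_spec hv
    have : w ∈ s(v, Sym2.Mem.other hv) := by rw [hsp]; exact hw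
    rw [Sym2.mem_iff] at this
    rcases this with h | h
    · exact h.symm
    · exact absurd (h ▸ hc) hnw
  -- the map on flags
  let f : F → Quotient (vertexOrbitSetoid G) ⊕ Quotient (edgeOrbitSetoid G) := fun p =>
    if cond p.1.1 p.1.2 then Sum.inl ⟦p.1.1⟧ else Sum.inr ⟦p.1.2⟧
  have hcond_transport : ∀ (p q : F) (φ : G ≃g G), φ p.1.1 = q.1.1 →
      Sym2.map ⇑φ (p.1.2 : Sym2 V) = (q.1.2 : Sym2 V) → cond p.1.1 p.1.2 → cond q.1.1 q.1.2 := by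
    intro p q φ h1 h2 hc
    have := hK5 φ p.1.1 p.1.2 hc
    rw [h1, h2] at this
    exact this
  have hf : ∀ p q : F, (flagOrbitSetoid G).r p q → f p = f q := by
    intro p q ⟨φ, h1, h2⟩
    have hsymm : (flagOrbitSetoid G).r q p := (flagOrbitSetoid G).iseqv.symm ⟨φ, h1, h2⟩
    by_cases hc : cond p.1.1 p.1.2
    · have hcq : cond q.1.1 q.1.2 := hcond_transport p q φ h1 h2 hc
      simp only [f, if_pos hc, if_pos hcq]
      exact congrArg Sum.inl (Quotient.sound ⟨φ, h1⟩)
    · have hcq : ¬cond q.1.1 q.1.2 := by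
        intro hcq
        obtain ⟨ψ, g1, g2⟩ := hsymm
        exact hc (hcond_transport q p ψ g1 g2 hcq)
      simp only [f, if_neg hc, if_neg hcq]
      exact congrArg Sum.inr (Quotient.sound ⟨φ, h2⟩)
  let Φ : Quotient (flagOrbitSetoid G) ⊕ PUnit.{1} →
      Quotient (vertexOrbitSetoid G) ⊕ Quotient (edgeOrbitSetoid G) :=
    Sum.elim (Quotient.lift f hf) (fun _ => Sum.inl ⟦z⟧)
  have hinj : Function.Injective Φ := by
    rintro (x | x) (y | y) hxy
    · induction x using Quotient.ind with | _ p =>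
      induction y using Quotient.ind with | _ q =>
      simp only [Φ, f, Sum.elim_inl, Quotient.lift_mk] at hxy
      by_cases hcp : cond p.1.1 p.1.2 <;> by_cases hcq : cond q.1.1 q.1.2
      · rw [if_pos hcp, if_pos hcq] at hxy
        obtain ⟨φ, hφ⟩ := Quotient.exact (Sum.inl.inj hxy)
        refine congrArg Sum.inl (Quotient.sound ⟨φ, hφ, ?_⟩)
        rw [← hcp.2, ← hcq.2, Sym2.map_pair_eq, ← nxt_map hG φ (hz φ), hφ]
      · rw [if_pos hcp, if_neg hcq] at hxy
        exact absurd hxy (by simp)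
      · rw [if_neg hcp, if_pos hcq] at hxy
        exact absurd hxy (by simp)
      · rw [if_neg hcp, if_neg hcq] at hxy
        obtain ⟨φ, hφ⟩ := Quotient.exact (Sum.inr.inj hxy)
        have hmem : φ p.1.1 ∈ (q.1.2 : Sym2 V) := by
          rw [← hφ, Sym2.mem_map]
          exact ⟨p.1.1, p.2, rfl⟩
        have hnc : ¬cond (φ p.1.1) q.1.2 := by
          rintro ⟨n1, n2⟩
          refine hcp ⟨fun hc => n1 (by rw [hc, hz φ]), ?_⟩
          apply Sym2.map.injective φ.injective
          rw [Sym2.map_pair_eq, ← nxt_map hG φ (hz φ), n2, hφ]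
        have := hK6 q.1.2 (φ p.1.1) q.1.1 hmem q.2 hnc hcq
        exact congrArg Sum.inl (Quotient.sound ⟨φ, this, hφ⟩)
    · induction x using Quotient.ind with | _ p =>
      simp only [Φ, f, Sum.elim_inl, Sum.elim_inr, Quotient.lift_mk] at hxy
      by_cases hcp : cond p.1.1 p.1.2
      · rw [if_pos hcp] at hxy
        obtain ⟨φ, hφ⟩ := Quotient.exact (Sum.inl.inj hxy)
        exact absurd (hK4 φ p.1.1 hφ) hcp.1
      · rw [if_neg hcp] at hxy
        exact absurd hxy (by simp)
    · induction y using Quotient.ind with | _ q =>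
      simp only [Φ, f, Sum.elim_inl, Sum.elim_inr, Quotient.lift_mk] at hxy
      by_cases hcq : cond q.1.1 q.1.2
      · rw [if_pos hcq] at hxy
        obtain ⟨φ, hφ⟩ := Quotient.exact (Sum.inl.inj hxy.symm)
        exact absurd (hK4 φ q.1.1 hφ) hcq.1
      · rw [if_neg hcq] at hxy
        exact absurd hxy.symm (by simp)
    · rfl
  have hsurj : Function.Surjective Φ := by
    rintro (x | x)
    · induction x using Quotient.ind with | _ v =>
      by_cases hvz : v = z
      · exact ⟨Sum.inr PUnit.unit, by simp [Φ, hvz]⟩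
      · have hedge : s(v, nxt hG z v) ∈ G.edgeSet := (nxt_adj hG hvz)
        refine ⟨Sum.inl ⟦⟨(v, ⟨_, hedge⟩), Sym2.mem_mk_left _ _⟩⟧, ?_⟩
        simp only [Φ, f, Sum.elim_inl, Quotient.lift_mk]
        rw [if_pos ⟨hvz, rfl⟩]
    · induction x using Quotient.ind with | _ e =>
      obtain ⟨ev, he⟩ := e
      induction ev using Sym2.ind with | _ a b =>
      have hadj : G.Adj a b := he
      by_cases hca : cond a ⟨s(a, b), he⟩
      · have hcb : ¬cond b ⟨s(a, b), he⟩ := fun hcb =>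
          hK2 ⟨s(a, b), he⟩ a b (Sym2.mem_mk_left _ _) (Sym2.mem_mk_right _ _) hadj.ne hca hcb
        refine ⟨Sum.inl ⟦⟨(b, ⟨s(a, b), he⟩), Sym2.mem_mk_right _ _⟩⟧, ?_⟩
        simp only [Φ, f, Sum.elim_inl, Quotient.lift_mk]
        rw [if_neg hcb]
      · refine ⟨Sum.inl ⟦⟨(a, ⟨s(a, b), he⟩), Sym2.mem_mk_left _ _⟩⟧, ?_⟩
        simp only [Φ, f, Sum.elim_inl, Quotient.lift_mk]
        rw [if_neg hca]
  have hcard := Nat.card_congr (Equiv.ofBijective Φ ⟨hinj, hsurj⟩)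
  rw [Nat.card_sum, Nat.card_sum] at hcard
  have hp1 : Nat.card PUnit.{1} = 1 := Nat.card_unique
  rw [hp1] at hcard
  omega

open OrbitTreeAux in
/-- Counting lemma in the case of an invariant edge. -/
lemma count_center_edge {V : Type*} [Fintype V] [DecidableEq V] (G : SimpleGraph V)
    (hG : G.IsTree) {a₀ b₀ : V} (h₀ : G.Adj a₀ b₀)
    (hinv : ∀ φ : G ≃g G, Sym2.map ⇑φ s(a₀, b₀) = s(a₀, b₀)) :
    Nat.card (Quotient (vertexOrbitSetoid G)) + Nat.card (Quotient (edgeOrbitSetoid G))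
      = 1 + Nat.card (Quotient (flagOrbitSetoid G)) := by
  classical
  set F := {p : V × G.edgeSet // p.1 ∈ (p.2 : Sym2 V)} with hF
  let e₀ : G.edgeSet := ⟨s(a₀, b₀), h₀⟩
  let cond : V → G.edgeSet → Prop := fun v e => s(v, nxtE hG a₀ b₀ v) = (e : Sym2 V)
  have hmapinv : ∀ (φ : G ≃g G) (x : Sym2 V), Sym2.map ⇑φ.symm (Sym2.map ⇑φ x) = x := by
    intro φ x
    rw [Sym2.map_map]
    have hid : (⇑φ.symm ∘ ⇑φ) = id := funext fun y => φ.symm_apply_apply y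
    rw [hid, Sym2.map_id, id]
  have hE0 : ∀ (φ : G ≃g G) (x : Sym2 V), Sym2.map ⇑φ x = s(a₀, b₀) → x = s(a₀, b₀) := by
    intro φ x hx
    have := congrArg (Sym2.map ⇑φ.symm) hx
    rw [hmapinv φ x, hinv φ.symm] at this
    exact this
  have hca₀ : ∀ (e : G.edgeSet), (e : Sym2 V) = s(a₀, b₀) → cond a₀ e := by
    intro e he
    show s(a₀, nxtE hG a₀ b₀ a₀) = (e : Sym2 V)
    rw [nxtE_a₀ hG h₀, he]
  have hcb₀ : ∀ (e : G.edgeSet), (e : Sym2 V) = s(a₀, b₀) → cond b₀ e := by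
    intro e he
    show s(b₀, nxtE hG a₀ b₀ b₀) = (e : Sym2 V)
    rw [nxtE_b₀ hG h₀, he, Sym2.eq_swap]
  have hK5 : ∀ (φ : G ≃g G) (v : V) (e : G.edgeSet), cond v e →
      s(φ v, nxtE hG a₀ b₀ (φ v)) = Sym2.map ⇑φ (e : Sym2 V) := by
    intro φ v e h2
    rw [nxtE_map hG h₀ φ (hinv φ) v, ← Sym2.map_pair_eq, h2]
  -- two children force the invariant edge
  have hK2 : ∀ (e : G.edgeSet) (v w : V), v ∈ (e : Sym2 V) → w ∈ (e : Sym2 V) → v ≠ w →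
      cond v e → cond w e → (e : Sym2 V) = s(a₀, b₀) := by
    intro e v w hv hw hvw hv2 hw2
    have hwmem : w ∈ s(v, nxtE hG a₀ b₀ v) := hv2.symm ▸ hw
    have hvmem : v ∈ s(w, nxtE hG a₀ b₀ w) := hw2.symm ▸ hv
    rw [Sym2.mem_iff] at hwmem hvmem
    have h1 : nxtE hG a₀ b₀ v = w := ((hwmem.resolve_left (Ne.symm hvw))).symm
    have h2 : nxtE hG a₀ b₀ w = v := ((hvmem.resolve_left hvw)).symm
    by_contra hne
    have hadj : G.Adj v w := h1 ▸ nxtE_adj hG h₀ v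
    exact nxtE_not_both hG h₀ hadj (fun hc => hne (hv2.symm.trans (by rw [h1, hc]))) h1 h2
  have hK3 : ∀ (e : G.edgeSet) (v : V) (hv : v ∈ (e : Sym2 V)), ¬cond v e →
      cond (Sym2.Mem.other hv) e := by
    intro e v hv hnc
    set w := Sym2.Mem.other hv with hw
    have hsp : s(v, w) = (e : Sym2 V) := Sym2.other_spec hv
    have hadj : G.Adj v w := by
      rw [← SimpleGraph.mem_edgeSet, hsp]
      exact e.property
    rcases nxtE_or hG h₀ hadj with hn | hn
    · exact absurd (show cond v e by rw [show cond v e = (s(v, nxtE hG a₀ b₀ v) = (e : Sym2 V)) from rfl, hn, hsp]) hnc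
    · show s(w, nxtE hG a₀ b₀ w) = (e : Sym2 V)
      rw [hn, Sym2.eq_swap, hsp]
  have hK6 : ∀ (e : G.edgeSet) (v w : V) (hv : v ∈ (e : Sym2 V)), w ∈ (e : Sym2 V) →
      ¬cond v e → ¬cond w e → v = w := by
    intro e v w hv hw hnv hnw
    have hc := hK3 e v hv hnv
    have hsp : s(v, Sym2.Mem.other hv) = (e : Sym2 V) := Sym2.other_spec hv
    have : w ∈ s(v, Sym2.Mem.other hv) := by rw [hsp]; exact hw
    rw [Sym2.mem_iff] at this
    rcases this with h | h
    · exact h.symm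
    · exact absurd (h ▸ hc) hnw
  let f : F → Quotient (vertexOrbitSetoid G) ⊕ Quotient (edgeOrbitSetoid G) := fun p =>
    if cond p.1.1 p.1.2 then Sum.inl ⟦p.1.1⟧ else Sum.inr ⟦p.1.2⟧
  have hcond_transport : ∀ (p q : F) (φ : G ≃g G), φ p.1.1 = q.1.1 →
      Sym2.map ⇑φ (p.1.2 : Sym2 V) = (q.1.2 : Sym2 V) → cond p.1.1 p.1.2 → cond q.1.1 q.1.2 := by
    intro p q φ h1 h2 hc
    have := hK5 φ p.1.1 p.1.2 hc
    rw [h1, h2] at this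
    exact this
  have hf : ∀ p q : F, (flagOrbitSetoid G).r p q → f p = f q := by
    intro p q ⟨φ, h1, h2⟩
    have hsymm : (flagOrbitSetoid G).r q p := (flagOrbitSetoid G).iseqv.symm ⟨φ, h1, h2⟩
    by_cases hc : cond p.1.1 p.1.2
    · have hcq : cond q.1.1 q.1.2 := hcond_transport p q φ h1 h2 hc
      simp only [f, if_pos hc, if_pos hcq]
      exact congrArg Sum.inl (Quotient.sound ⟨φ, h1⟩)
    · have hcq : ¬cond q.1.1 q.1.2 := by
        intro hcq
        obtain ⟨ψ, g1, g2⟩ := hsymm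
        exact hc (hcond_transport q p ψ g1 g2 hcq)
      simp only [f, if_neg hc, if_neg hcq]
      exact congrArg Sum.inr (Quotient.sound ⟨φ, h2⟩)
  let Φ : Quotient (flagOrbitSetoid G) ⊕ PUnit.{1} →
      Quotient (vertexOrbitSetoid G) ⊕ Quotient (edgeOrbitSetoid G) :=
    Sum.elim (Quotient.lift f hf) (fun _ => Sum.inr ⟦e₀⟧)
  have hinj : Function.Injective Φ := by
    rintro (x | x) (y | y) hxy
    · induction x using Quotient.ind with | _ p =>
      induction y using Quotient.ind with | _ q =>
      simp only [Φ, f, Sum.elim_inl, Quotient.lift_mk] at hxy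
      by_cases hcp : cond p.1.1 p.1.2 <;> by_cases hcq : cond q.1.1 q.1.2
      · rw [if_pos hcp, if_pos hcq] at hxy
        obtain ⟨φ, hφ⟩ := Quotient.exact (Sum.inl.inj hxy)
        refine congrArg Sum.inl (Quotient.sound ⟨φ, hφ, ?_⟩)
        rw [← hcp, ← hcq, Sym2.map_pair_eq, ← nxtE_map hG h₀ φ (hinv φ), hφ]
      · rw [if_pos hcp, if_neg hcq] at hxy
        exact absurd hxy (by simp)
      · rw [if_neg hcp, if_pos hcq] at hxy
        exact absurd hxy (by simp)
      · rw [if_neg hcp, if_neg hcq] at hxy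
        obtain ⟨φ, hφ⟩ := Quotient.exact (Sum.inr.inj hxy)
        have hmem : φ p.1.1 ∈ (q.1.2 : Sym2 V) := by
          rw [← hφ, Sym2.mem_map]
          exact ⟨p.1.1, p.2, rfl⟩
        have hnc : ¬cond (φ p.1.1) q.1.2 := by
          intro n2
          refine hcp ?_
          show s(p.1.1, nxtE hG a₀ b₀ p.1.1) = (p.1.2 : Sym2 V)
          apply Sym2.map.injective φ.injective
          rw [Sym2.map_pair_eq, ← nxtE_map hG h₀ φ (hinv φ), n2, hφ]
        have := hK6 q.1.2 (φ p.1.1) q.1.1 hmem q.2 hnc hcq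
        exact congrArg Sum.inl (Quotient.sound ⟨φ, this, hφ⟩)
    · induction x using Quotient.ind with | _ p =>
      simp only [Φ, f, Sum.elim_inl, Sum.elim_inr, Quotient.lift_mk] at hxy
      by_cases hcp : cond p.1.1 p.1.2
      · rw [if_pos hcp] at hxy
        exact absurd hxy (by simp)
      · rw [if_neg hcp] at hxy
        obtain ⟨φ, hφ⟩ := Quotient.exact (Sum.inr.inj hxy)
        have hpe : (p.1.2 : Sym2 V) = s(a₀, b₀) := hE0 φ _ hφ
        have hmem : p.1.1 ∈ s(a₀, b₀) := hpe ▸ p.2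
        rw [Sym2.mem_iff] at hmem
        rcases hmem with h | h
        · exact absurd (h ▸ hca₀ p.1.2 hpe) hcp
        · exact absurd (h ▸ hcb₀ p.1.2 hpe) hcp
    · induction y using Quotient.ind with | _ q =>
      simp only [Φ, f, Sum.elim_inl, Sum.elim_inr, Quotient.lift_mk] at hxy
      by_cases hcq : cond q.1.1 q.1.2
      · rw [if_pos hcq] at hxy
        exact absurd hxy (by simp)
      · rw [if_neg hcq] at hxy
        obtain ⟨φ, hφ⟩ := Quotient.exact (Sum.inr.inj hxy.symm)
        have hpe : (q.1.2 : Sym2 V) = s(a₀, b₀) := hE0 φ _ hφ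
        have hmem : q.1.1 ∈ s(a₀, b₀) := hpe ▸ q.2
        rw [Sym2.mem_iff] at hmem
        rcases hmem with h | h
        · exact absurd (h ▸ hca₀ q.1.2 hpe) hcq
        · exact absurd (h ▸ hcb₀ q.1.2 hpe) hcq
    · rfl
  have hsurj : Function.Surjective Φ := by
    rintro (x | x)
    · induction x using Quotient.ind with | _ v =>
      have hedge : s(v, nxtE hG a₀ b₀ v) ∈ G.edgeSet := nxtE_adj hG h₀ v
      refine ⟨Sum.inl ⟦⟨(v, ⟨_, hedge⟩), Sym2.mem_mk_left _ _⟩⟧, ?_⟩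
      simp only [Φ, f, Sum.elim_inl, Quotient.lift_mk]
      rw [if_pos (show cond v ⟨_, hedge⟩ from rfl)]
    · induction x using Quotient.ind with | _ e =>
      by_cases he₀ : (e : Sym2 V) = s(a₀, b₀)
      · refine ⟨Sum.inr PUnit.unit, ?_⟩
        simp only [Φ, Sum.elim_inr]
        congr 1
        exact congrArg _ (Subtype.ext he₀.symm)
      · obtain ⟨ev, he⟩ := e
        induction ev using Sym2.ind with | _ a b =>
        have hadj : G.Adj a b := he
        by_cases hca : cond a ⟨s(a, b), he⟩
        · have hcb : ¬cond b ⟨s(a, b), he⟩ := fun hcb =>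
            he₀ (hK2 ⟨s(a, b), he⟩ a b (Sym2.mem_mk_left _ _) (Sym2.mem_mk_right _ _)
              hadj.ne hca hcb)
          refine ⟨Sum.inl ⟦⟨(b, ⟨s(a, b), he⟩), Sym2.mem_mk_right _ _⟩⟧, ?_⟩
          simp only [Φ, f, Sum.elim_inl, Quotient.lift_mk]
          rw [if_neg hcb]
        · refine ⟨Sum.inl ⟦⟨(a, ⟨s(a, b), he⟩), Sym2.mem_mk_left _ _⟩⟧, ?_⟩
          simp only [Φ, f, Sum.elim_inl, Quotient.lift_mk]
          rw [if_neg hca]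
  have hcard := Nat.card_congr (Equiv.ofBijective Φ ⟨hinj, hsurj⟩)
  rw [Nat.card_sum, Nat.card_sum] at hcard
  have hp1 : Nat.card PUnit.{1} = 1 := Nat.card_unique
  rw [hp1] at hcard
  omega

/-- For a finite tree, the number of orbits of vertices plus the number of orbits of
edges under the automorphism group equals `1` plus the number of orbits of incident
vertex–edge pairs. -/
theorem orbit_count_tree {V : Type*} [Fintype V] (G : SimpleGraph V) (hG : G.IsTree) :
    Nat.card (Quotient (vertexOrbitSetoid G)) + Nat.card (Quotient (edgeOrbitSetoid G))
      = 1 + Nat.card (Quotient (flagOrbitSetoid G)) := by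
  classical
  rcases OrbitTreeAux.exists_center_aux (Fintype.card V) G le_rfl hG with ⟨z, hz⟩ | ⟨a, b, hab, hinv⟩
  · exact count_center_vertex G hG hz
  · exact count_center_edge G hG hab hinv
end
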